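/- arXiv:2506.00663 — 5 statements merged into one kernel-verified Lean document; each statement's English description precedes it below -/
import Mathlib

section
/- If f(z) = Σ_{n=0}^∞ a_n z^n converges for |z| ≤ r and g(z) = Σ_{n=0}^∞ b_n z^n converges for |z| ≤ ρ, then for |z| < ρ r, (1/(2πi)) ∫_{|w|=r} f(w) g(z/w) dw/w = Σ_{n=0}^∞ a_n b_n z^n. -/
open Complex Real

lemma summable_norm_aux {c : ℕ → ℂ} {t t' : ℝ} (ht : 0 ≤ t) (htt' : t < t')
    (h : Summable fun n => c n * (t' : ℂ) ^ n) :
    Summable fun n => ‖c n‖ * t ^ n := by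
  have ht' : 0 < t' := ht.trans_lt htt'
  obtain ⟨C, hC⟩ := h.tendsto_atTop_zero.norm.bddAbove_range
  have hC' : ∀ n, ‖c n‖ * t' ^ n ≤ C := by
    intro n
    have := hC (Set.mem_range_self (f := fun n => ‖c n * (t' : ℂ) ^ n‖) n)
    simpa [norm_mul, norm_pow, abs_of_pos ht'] using this
  refine Summable.of_nonneg_of_le (fun n => by positivity) (fun n => ?_)
    ((summable_geometric_of_lt_one (by positivity) ((div_lt_one ht').2 htt')).mul_left C)
  have : ‖c n‖ * t ^ n = (‖c n‖ * t' ^ n) * (t / t') ^ n := by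
    rw [div_pow]; field_simp
  rw [this]
  exact mul_le_mul_of_nonneg_right (hC' n) (by positivity)

lemma hasFPower_aux {r' : ℝ} (hr' : 0 < r') (f : ℂ → ℂ) (a : ℕ → ℂ)
    (hf : ∀ z : ℂ, ‖z‖ < r' → HasSum (fun n : ℕ => a n * z ^ n) (f z)) :
    HasFPowerSeriesOnBall f
      (fun n => ContinuousMultilinearMap.mkPiRing ℂ (Fin n) (a n)) 0 (ENNReal.ofReal r') := by
  set p : FormalMultilinearSeries ℂ ℂ ℂ :=
    fun n => ContinuousMultilinearMap.mkPiRing ℂ (Fin n) (a n) with hp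
  refine ⟨?_, ENNReal.ofReal_pos.2 hr', ?_⟩
  · refine ENNReal.le_of_forall_nnreal_lt fun t ht => ?_
    have htr' : (t : ℝ) < r' := by
      rwa [← ENNReal.ofReal_coe_nnreal, ENNReal.ofReal_lt_ofReal_iff hr'] at ht
    set t'' : ℝ := ((t : ℝ) + r') / 2 with ht''
    have h1 : (t : ℝ) < t'' := by simp [ht'']; linarith
    have h2 : t'' < r' := by simp [ht'']; linarith
    have h3 : 0 ≤ t'' := le_trans t.coe_nonneg h1.le
    have hs := (hf (t'' : ℂ) (by simpa [_root_.abs_of_nonneg h3] using h2)).summable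
    obtain ⟨C, hC⟩ := hs.tendsto_atTop_zero.norm.bddAbove_range
    refine p.le_radius_of_bound C fun n => ?_
    have hCn := hC (Set.mem_range_self (f := fun n => ‖a n * (t'' : ℂ) ^ n‖) n)
    simp only [norm_mul, norm_pow, Complex.norm_real, norm_real,
      Real.norm_eq_abs, _root_.abs_of_nonneg h3] at hCn
    calc ‖p n‖ * (t : ℝ) ^ n = ‖a n‖ * (t : ℝ) ^ n := by
          rw [hp]; simp [ContinuousMultilinearMap.norm_mkPiRing]
      _ ≤ ‖a n‖ * t'' ^ n := by
          exact mul_le_mul_of_nonneg_left (pow_le_pow_left₀ t.coe_nonneg h1.le n) (norm_nonneg _)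
      _ ≤ C := hCn
  · intro y hy
    have hy' : ‖y‖ < r' := by
      have h0 := mem_emetric_ball_zero_iff.1 hy
      rwa [← ofReal_norm, ENNReal.ofReal_lt_ofReal_iff hr'] at h0
    have := hf y hy'
    simp only [zero_add]
    convert this using 2 with n
    · rfl
    simp [p, ContinuousMultilinearMap.mkPiRing_apply, Finset.prod_const, smul_eq_mul, mul_comm]

lemma coeff_formula {r r' : ℝ} (hr : 0 < r) (hrr' : r < r') (f : ℂ → ℂ) (a : ℕ → ℂ)
    (hf : ∀ z : ℂ, ‖z‖ < r' → HasSum (fun n : ℕ => a n * z ^ n) (f z)) (n : ℕ) :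
    (∮ w in C(0, r), w⁻¹ ^ n • w⁻¹ • f w) = 2 * π * Complex.I * a n := by
  have hr' : 0 < r' := hr.trans hrr'
  have hrc : (r.toNNReal : ℝ) = r := Real.coe_toNNReal r hr.le
  have hfp := hasFPower_aux hr' f a hf
  have hdiff : DifferentiableOn ℂ f (Metric.closedBall 0 r.toNNReal) := by
    refine hfp.differentiableOn.mono fun x hx => ?_
    rw [Metric.mem_closedBall, dist_zero_right, hrc] at hx
    rw [EMetric.mem_ball, edist_zero_right]
    have : ‖x‖ < r' := lt_of_le_of_lt hx hrr'
    rw [← ofReal_norm]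
    exact ENNReal.ofReal_lt_ofReal_iff hr' |>.2 this
  have hc := hdiff.hasFPowerSeriesOnBall (by simpa using hr : 0 < r.toNNReal)
  have heq := hfp.hasFPowerSeriesAt.eq_formalMultilinearSeries hc.hasFPowerSeriesAt
  have h2 := congrArg (fun m => m (fun _ => (1 : ℂ))) (congrFun heq n)
  simp only [cauchyPowerSeries, ContinuousMultilinearMap.mkPiRing_apply, Finset.prod_const,
    one_pow, one_smul, sub_zero, hrc] at h2
  rw [h2, smul_eq_mul, ← mul_assoc, mul_inv_cancel₀ Complex.two_pi_I_ne_zero, one_mul]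

set_option maxHeartbeats 1000000 in
/-- Hadamard product formula:
`(1/(2πi)) ∮_{|w|=r} f(w) g(z/w) dw/w = Σ aₙ bₙ zⁿ` for `|z| < ρ r`. -/
theorem hadamard_product (r ρ r' ρ' : ℝ) (hr : 0 < r) (hρ : 0 < ρ)
    (hrr' : r < r') (hρρ' : ρ < ρ')
    (f g : ℂ → ℂ) (a b : ℕ → ℂ)
    (hf : ∀ z : ℂ, ‖z‖ < r' → HasSum (fun n : ℕ => a n * z ^ n) (f z))
    (hg : ∀ z : ℂ, ‖z‖ < ρ' → HasSum (fun n : ℕ => b n * z ^ n) (g z)) :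
    ∀ z : ℂ, ‖z‖ < ρ * r →
      (1 / (2 * π * Complex.I)) * (∮ w in C(0, r), f w * g (z / w) / w) =
        ∑' n : ℕ, a n * b n * z ^ n := by
  intro z hz
  have hr' : 0 < r' := hr.trans hrr'
  have hρ' : 0 < ρ' := hρ.trans hρρ'
  set q : ℝ := ‖z‖ / r with hq_def
  have hq0 : 0 ≤ q := by positivity
  have hqρ : q < ρ := (div_lt_iff₀ hr).2 hz
  have hqρ' : q < ρ' := hqρ.trans hρρ'
  -- continuity of f on the circle and a bound M
  have hfp := hasFPower_aux hr' f a hf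
  have hball : Metric.sphere (0 : ℂ) r ⊆ Metric.eball (0 : ℂ) (ENNReal.ofReal r') := by
    intro x hx
    rw [mem_sphere_iff_norm, sub_zero] at hx
    rw [Metric.mem_eball, edist_zero_right, ← ofReal_norm]
    exact (ENNReal.ofReal_lt_ofReal_iff hr').2 (hx ▸ hrr')
  have hfc : Continuous fun θ : ℝ => f (circleMap 0 r θ) := by
    refine (hfp.continuousOn.mono hball).comp_continuous (continuous_circleMap 0 r) fun θ => ?_
    simp [abs_of_pos hr]
  obtain ⟨M, hM⟩ := (isCompact_sphere (0 : ℂ) r).exists_bound_of_continuousOn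
    (hfp.continuousOn.mono hball)
  have hwne : ∀ θ : ℝ, circleMap 0 r θ ≠ 0 := fun θ => circleMap_ne_center hr.ne'
  have hwnorm : ∀ θ : ℝ, ‖circleMap 0 r θ‖ = r := fun θ => by
    simp [norm_circleMap_zero, abs_of_pos hr]
  have hzw : ∀ θ : ℝ, ‖z / circleMap 0 r θ‖ = q := fun θ => by
    rw [norm_div, hwnorm]
  -- summability of the dominating series
  have hsummable : Summable fun n => ‖b n‖ * q ^ n * M :=
    (summable_norm_aux hq0 hqρ
      (hg (ρ : ℂ) (by simpa [_root_.abs_of_pos hρ] using hρρ')).summable).mul_right M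
  -- the key HasSum of circle integrals
  have hsum : HasSum
      (fun n : ℕ => ∮ w in C(0, r), b n * (z / w) ^ n * w⁻¹ * f w)
      (∮ w in C(0, r), f w * g (z / w) / w) := by
    simp only [circleIntegral]
    refine intervalIntegral.hasSum_integral_of_dominated_convergence
      (fun n θ => ‖b n‖ * q ^ n * M) (fun n => ?_) (fun n => ?_) ?_ ?_ ?_
    · apply Continuous.aestronglyMeasurable
      simp only [deriv_circleMap]
      exact ((continuous_circleMap 0 r).mul continuous_const).mul
        (((continuous_const.mul
            ((continuous_const.div (continuous_circleMap 0 r) hwne).pow n)).mul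
          ((continuous_circleMap 0 r).inv₀ hwne)).mul hfc)
    · refine Filter.Eventually.of_forall fun θ _ => ?_
      have hfM : ‖f (circleMap 0 r θ)‖ ≤ M := hM _ (by simp [abs_of_pos hr])
      have : ‖deriv (circleMap 0 r) θ •
          (b n * (z / circleMap 0 r θ) ^ n * (circleMap 0 r θ)⁻¹ * f (circleMap 0 r θ))‖
          = ‖b n‖ * q ^ n * ‖f (circleMap 0 r θ)‖ := by
        have hrne : r ≠ 0 := hr.ne'
        simp only [norm_smul, deriv_circleMap, norm_mul, norm_pow, norm_inv, Complex.norm_I,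
          mul_one, hzw, hwnorm]
        field_simp
      rw [this]
      exact mul_le_mul_of_nonneg_left hfM (by positivity)
    · exact Filter.Eventually.of_forall fun θ _ => hsummable
    · exact intervalIntegrable_const
    · refine Filter.Eventually.of_forall fun θ _ => ?_
      have hgw := hg (z / circleMap 0 r θ) (by rw [hzw]; exact hqρ')
      have := hgw.mul_left (deriv (circleMap 0 r) θ *
        ((circleMap 0 r θ)⁻¹ * f (circleMap 0 r θ)))
      convert this using 1
      · rfl
      · funext n; simp only [smul_eq_mul]; ring
      · simp only [smul_eq_mul, div_eq_mul_inv]; ring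
  -- evaluate each circle integral
  have heval : ∀ n : ℕ, (∮ w in C(0, r), b n * (z / w) ^ n * w⁻¹ * f w)
      = 2 * π * Complex.I * (a n * b n * z ^ n) := by
    intro n
    have e1 : (fun w : ℂ => b n * (z / w) ^ n * w⁻¹ * f w)
        = fun w : ℂ => (b n * z ^ n) • (w⁻¹ ^ n • w⁻¹ • f w) := by
      funext w
      simp only [smul_eq_mul, div_eq_mul_inv, mul_pow]
      ring
    rw [show (∮ w in C(0, r), b n * (z / w) ^ n * w⁻¹ * f w)
        = ∮ w in C(0, r), (b n * z ^ n) • (w⁻¹ ^ n • w⁻¹ • f w) from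
      congrArg (fun F => circleIntegral F 0 r) e1]
    rw [circleIntegral.integral_smul, coeff_formula hr hrr' f a hf n, smul_eq_mul]
    ring
  rw [funext heval] at hsum
  have h2 := hsum.mul_left ((2 * π * Complex.I)⁻¹)
  simp only [← mul_assoc, inv_mul_cancel₀ Complex.two_pi_I_ne_zero, one_mul] at h2
  rw [one_div, ← h2.tsum_eq]
end

section
/- For an integer m ≥ 2, the area of the m-leafed lemniscate region {w ∈ ℂ : |w^m - 1| < 1} equals 2^{2/m - 1} √π Γ(1/m + 1/2) / Γ(1/m + 1). -/
open MeasureTheory Complex Real Set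

section LemniscateAux

/-- Real Beta function identity, deduced from the complex one. -/
lemma lemAux_real_beta {a b : ℝ} (ha : 0 < a) (hb : 0 < b) :
    Real.Gamma a * Real.Gamma b
      = Real.Gamma (a + b) * ∫ x in (0:ℝ)..1, x ^ (a-1) * (1-x) ^ (b-1) := by
  have h := Complex.Gamma_mul_Gamma_eq_betaIntegral (s := (a:ℂ)) (t := (b:ℂ))
    (by simpa using ha) (by simpa using hb)
  have hBeta : Complex.betaIntegral (a:ℂ) (b:ℂ)
      = ((∫ x in (0:ℝ)..1, x ^ (a-1) * (1-x) ^ (b-1) : ℝ) : ℂ) := by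
    rw [Complex.betaIntegral, ← intervalIntegral.integral_ofReal]
    apply intervalIntegral.integral_congr
    intro x hx
    rw [Set.uIcc_of_le (by norm_num : (0:ℝ) ≤ 1)] at hx
    dsimp only
    rw [show ((a:ℂ) - 1) = ((a - 1 : ℝ) : ℂ) by push_cast; ring,
      show ((b:ℂ) - 1) = ((b - 1 : ℝ) : ℂ) by push_cast; ring,
      ← Complex.ofReal_cpow hx.1,
      show ((1:ℂ) - (x:ℂ)) = ((1 - x : ℝ):ℂ) by push_cast; ring,
      ← Complex.ofReal_cpow (by linarith [hx.2] : (0:ℝ) ≤ 1 - x)]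
    push_cast
    ring
  rw [hBeta, ← Complex.ofReal_add, Complex.Gamma_ofReal, Complex.Gamma_ofReal,
    Complex.Gamma_ofReal] at h
  exact_mod_cast h

lemma lemAux_continuous_cos_rpow {s : ℝ} (hs : 0 < s) :
    Continuous fun u : ℝ => Real.cos u ^ s := by
  apply continuous_iff_continuousAt.mpr fun x => ?_
  exact (Real.continuousAt_rpow_const _ _ (Or.inr hs.le)).comp Real.continuous_cos.continuousAt

/-- The integral of `cos^s` over a half-period. -/
lemma lemAux_integral_cos_rpow {s : ℝ} (hs : 0 < s) :
    ∫ u in (-(π/2))..(π/2), Real.cos u ^ s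
      = Real.sqrt π * Real.Gamma (s/2 + 1/2) / Real.Gamma (s/2 + 1) := by
  have hcont := lemAux_continuous_cos_rpow hs
  set g : ℝ → ℝ := fun x => x ^ ((1:ℝ)/2 - 1) * (1-x) ^ ((s/2 + 1/2) - 1) with hg
  -- image of the substitution
  have himg : (fun θ : ℝ => Real.sin θ ^ 2) '' Ioo 0 (π/2) = Ioo 0 1 := by
    ext x
    constructor
    · rintro ⟨θ, hθ, rfl⟩
      have h1 : 0 < Real.sin θ :=
        Real.sin_pos_of_pos_of_lt_pi hθ.1 (by linarith [Real.pi_pos, hθ.2])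
      have h2 : Real.sin θ < 1 := by
        have := Real.strictMonoOn_sin
          (Set.mem_Icc.mpr ⟨by linarith [Real.pi_pos, hθ.1], hθ.2.le⟩)
          (Set.mem_Icc.mpr ⟨by linarith [Real.pi_pos], le_refl _⟩) hθ.2
        simpa using this
      exact ⟨by dsimp only; positivity, by dsimp only; nlinarith⟩
    · rintro ⟨hx0, hx1⟩
      refine ⟨Real.arcsin (Real.sqrt x), ⟨?_, ?_⟩, ?_⟩
      · exact Real.arcsin_pos.mpr (Real.sqrt_pos.mpr hx0)
      · refine Real.arcsin_lt_pi_div_two.mpr ?_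
        rw [show (1:ℝ) = Real.sqrt 1 from (Real.sqrt_one).symm]
        exact Real.sqrt_lt_sqrt hx0.le hx1
      · have hle : Real.sqrt x ≤ 1 := by
          rw [show (1:ℝ) = Real.sqrt 1 from (Real.sqrt_one).symm]
          exact Real.sqrt_le_sqrt hx1.le
        show Real.sin (Real.arcsin (Real.sqrt x)) ^ 2 = x
        rw [Real.sin_arcsin (by linarith [Real.sqrt_nonneg x]) hle, Real.sq_sqrt hx0.le]
  have hderiv : ∀ θ ∈ Ioo (0:ℝ) (π/2), HasDerivWithinAt (fun θ : ℝ => Real.sin θ ^ 2)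
      (2 * Real.sin θ * Real.cos θ) (Ioo (0:ℝ) (π/2)) θ := by
    intro θ _
    have := ((Real.hasDerivAt_sin θ).fun_pow 2).hasDerivWithinAt
      (s := Ioo (0:ℝ) (π/2))
    simpa [mul_comm, mul_assoc, mul_left_comm] using this
  have hinj : InjOn (fun θ : ℝ => Real.sin θ ^ 2) (Ioo 0 (π/2)) := by
    have hmono : StrictMonoOn (fun θ : ℝ => Real.sin θ ^ 2) (Ioo 0 (π/2)) := by
      intro a ha b hb hab
      have hsa : 0 < Real.sin a :=
        Real.sin_pos_of_pos_of_lt_pi ha.1 (by linarith [Real.pi_pos, ha.2])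
      have hsb : Real.sin a < Real.sin b := by
        refine Real.strictMonoOn_sin ⟨by linarith [Real.pi_pos, ha.1], ha.2.le⟩
          ⟨by linarith [Real.pi_pos, hb.1], hb.2.le⟩ hab
      dsimp only
      nlinarith
    exact hmono.injOn
  have key := integral_image_eq_integral_abs_deriv_smul measurableSet_Ioo hderiv hinj g
  rw [himg] at key
  -- right side is 2 ∫ cos^s on (0, π/2)
  have hRHS : (∫ θ in Ioo (0:ℝ) (π/2), |2 * Real.sin θ * Real.cos θ| • g (Real.sin θ ^ 2))
      = ∫ θ in Ioo (0:ℝ) (π/2), 2 * Real.cos θ ^ s := by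
    apply setIntegral_congr_fun measurableSet_Ioo
    intro θ hθ
    have hsin : 0 < Real.sin θ :=
      Real.sin_pos_of_pos_of_lt_pi hθ.1 (by linarith [Real.pi_pos, hθ.2])
    have hcos : 0 < Real.cos θ :=
      Real.cos_pos_of_mem_Ioo ⟨by linarith [Real.pi_pos, hθ.1], hθ.2⟩
    have e1 : (Real.sin θ ^ 2 : ℝ) ^ ((1:ℝ)/2 - 1) = (Real.sin θ)⁻¹ := by
      rw [← Real.rpow_natCast (Real.sin θ) 2, ← Real.rpow_mul hsin.le]
      norm_num
      exact Real.rpow_neg_one _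
    have e2 : ((1 : ℝ) - Real.sin θ ^ 2) ^ ((s/2 + 1/2) - 1) = Real.cos θ ^ (s - 1) := by
      rw [← Real.cos_sq' θ, ← Real.rpow_natCast (Real.cos θ) 2, ← Real.rpow_mul hcos.le]
      norm_num
      ring_nf
    have e3 : Real.cos θ * Real.cos θ ^ (s-1) = Real.cos θ ^ s := by
      have h4 := Real.rpow_add hcos 1 (s-1)
      rw [Real.rpow_one] at h4
      rw [← h4]
      ring_nf
    rw [hg]
    dsimp only
    rw [e1, e2, abs_of_pos (by positivity), smul_eq_mul, ← e3]
    field_simp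
  rw [hRHS] at key
  -- convert both sides to interval integrals
  have hL : (∫ x in Ioo (0:ℝ) 1, g x) = ∫ x in (0:ℝ)..1, g x := by
    rw [intervalIntegral.integral_of_le (by norm_num : (0:ℝ) ≤ 1),
      MeasureTheory.integral_Ioc_eq_integral_Ioo]
  have hR : (∫ θ in Ioo (0:ℝ) (π/2), 2 * Real.cos θ ^ s)
      = 2 * ∫ u in (0:ℝ)..(π/2), Real.cos u ^ s := by
    rw [intervalIntegral.integral_of_le (by positivity : (0:ℝ) ≤ π/2),
      MeasureTheory.integral_Ioc_eq_integral_Ioo, MeasureTheory.integral_const_mul]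
  rw [hL, hR] at key
  -- evenness
  have h1 : (∫ u in (-(π/2))..(0:ℝ), Real.cos u ^ s) = ∫ u in (0:ℝ)..(π/2), Real.cos u ^ s := by
    have h2 := intervalIntegral.integral_comp_neg (a := (0:ℝ)) (b := π/2)
      (fun u => Real.cos u ^ s)
    simp only [Real.cos_neg, neg_zero] at h2
    rw [← h2]
  have heven : (∫ u in (-(π/2))..(π/2), Real.cos u ^ s)
      = 2 * ∫ u in (0:ℝ)..(π/2), Real.cos u ^ s := by
    rw [← intervalIntegral.integral_add_adjacent_intervals (a := -(π/2)) (b := (0:ℝ))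
      (c := π/2) (hcont.intervalIntegrable _ _) (hcont.intervalIntegrable _ _), h1]
    ring
  -- Beta identity
  have hbeta := lemAux_real_beta (a := 1/2) (b := s/2 + 1/2) (by norm_num) (by linarith)
  have hΓpos : 0 < Real.Gamma (s/2 + 1) := Real.Gamma_pos_of_pos (by linarith)
  rw [show (1:ℝ)/2 + (s/2 + 1/2) = s/2 + 1 by ring, Real.Gamma_one_half_eq] at hbeta
  have hgint : (∫ x in (0:ℝ)..1, g x)
      = ∫ x in (0:ℝ)..1, x ^ ((1:ℝ)/2 - 1) * (1-x) ^ ((s/2 + 1/2) - 1) := by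
    simp only [hg]
  rw [heven, ← key, hgint, eq_div_iff (ne_of_gt hΓpos)]
  linarith [hbeta]


lemma lemAux_slice (m : ℕ) (hm : 1 ≤ m) (θ : ℝ) :
    (∫⁻ r : ℝ, ((Set.Ioi (0:ℝ) ×ˢ Set.Ioo (-π) π)
        ∩ {p : ℝ × ℝ | p.1 ^ m < 2 * Real.cos ((m : ℝ) * p.2)}).indicator
        (fun p : ℝ × ℝ => ENNReal.ofReal p.1) (r, θ))
      = (Set.Ioo (-π) π).indicator
          (fun θ => ENNReal.ofReal ((max (2 * Real.cos ((m : ℝ) * θ)) 0) ^ (2 / (m : ℝ)) / 2)) θ := by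
  have hm0' : (0 : ℝ) < m := by exact_mod_cast Nat.pos_of_ne_zero (by omega)
  have hmne : (m : ℝ) ≠ 0 := ne_of_gt hm0'
  have hsexp : (0 : ℝ) < 2 / m := by positivity
  by_cases hθ : θ ∈ Set.Ioo (-π) π
  · set c := 2 * Real.cos ((m : ℝ) * θ) with hc
    by_cases hcpos : 0 < c
    · set R := c ^ ((m : ℝ)⁻¹) with hR
      have hR0 : 0 < R := Real.rpow_pos_of_pos hcpos _
      have hRm : R ^ m = c := by
        rw [hR, ← Real.rpow_natCast (c ^ ((m : ℝ)⁻¹)) m, ← Real.rpow_mul hcpos.le,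
          inv_mul_cancel₀ hmne, Real.rpow_one]
      have hindic : ∀ r : ℝ, ((Set.Ioi (0:ℝ) ×ˢ Set.Ioo (-π) π)
          ∩ {p : ℝ × ℝ | p.1 ^ m < 2 * Real.cos ((m : ℝ) * p.2)}).indicator
          (fun p : ℝ × ℝ => ENNReal.ofReal p.1) (r, θ)
          = (Set.Ioo 0 R).indicator (fun r => ENNReal.ofReal r) r := by
        intro r
        have hiff : ((r, θ) ∈ (Set.Ioi (0:ℝ) ×ˢ Set.Ioo (-π) π)
            ∩ {p : ℝ × ℝ | p.1 ^ m < 2 * Real.cos ((m : ℝ) * p.2)}) ↔ r ∈ Set.Ioo 0 R := by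
          simp only [Set.mem_inter_iff, Set.mem_prod, Set.mem_Ioi, Set.mem_Ioo, Set.mem_setOf_eq]
          constructor
          · rintro ⟨⟨hr0, _⟩, hrc⟩
            refine ⟨hr0, ?_⟩
            rw [← hc] at hrc
            exact (pow_lt_pow_iff_left₀ (n := m) hr0.le hR0.le (by omega)).mp
              (by rw [hRm]; exact hrc)
          · rintro ⟨hr0, hrR⟩
            refine ⟨⟨hr0, hθ⟩, ?_⟩
            rw [← hc, ← hRm]
            exact pow_lt_pow_left₀ (n := m) hrR hr0.le (by omega)
        by_cases hrT : r ∈ Set.Ioo 0 R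
        · rw [Set.indicator_of_mem hrT, Set.indicator_of_mem (hiff.mpr hrT)]
        · rw [Set.indicator_of_notMem hrT,
            Set.indicator_of_notMem (fun h => hrT (hiff.mp h))]
      have hR2 : R ^ 2 = c ^ (2 / (m : ℝ)) := by
        rw [hR, ← Real.rpow_natCast (c ^ ((m : ℝ)⁻¹)) 2, ← Real.rpow_mul hcpos.le]
        congr 1
        push_cast
        ring
      simp_rw [hindic]
      rw [lintegral_indicator measurableSet_Ioo, Set.indicator_of_mem hθ]
      rw [← MeasureTheory.ofReal_integral_eq_lintegral_ofReal]
      · rw [← MeasureTheory.integral_Ioc_eq_integral_Ioo,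
          ← intervalIntegral.integral_of_le hR0.le, integral_id]
        rw [max_eq_left hcpos.le, ← hR2]
        norm_num
      · exact ((continuous_id.intervalIntegrable (μ := volume) 0 R).1).mono_set
          Set.Ioo_subset_Ioc_self
      · filter_upwards [MeasureTheory.ae_restrict_mem measurableSet_Ioo] with x hx using hx.1.le
    · have hcle : c ≤ 0 := not_lt.mp hcpos
      have hzero : ∀ r : ℝ, ((Set.Ioi (0:ℝ) ×ˢ Set.Ioo (-π) π)
          ∩ {p : ℝ × ℝ | p.1 ^ m < 2 * Real.cos ((m : ℝ) * p.2)}).indicator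
          (fun p : ℝ × ℝ => ENNReal.ofReal p.1) (r, θ) = 0 := by
        intro r
        apply Set.indicator_of_notMem
        rintro ⟨⟨hr0, -⟩, hrc⟩
        simp only [Set.mem_setOf_eq] at hrc
        rw [← hc] at hrc
        have : (0:ℝ) < r ^ m := pow_pos hr0 m
        linarith
      simp_rw [hzero]
      rw [lintegral_zero, Set.indicator_of_mem hθ]
      rw [max_eq_right hcle, Real.zero_rpow hsexp.ne']
      norm_num
  · have hzero : ∀ r : ℝ, ((Set.Ioi (0:ℝ) ×ˢ Set.Ioo (-π) π)
        ∩ {p : ℝ × ℝ | p.1 ^ m < 2 * Real.cos ((m : ℝ) * p.2)}).indicator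
        (fun p : ℝ × ℝ => ENNReal.ofReal p.1) (r, θ) = 0 := fun r =>
      Set.indicator_of_notMem (fun h => hθ h.1.2) _
    simp_rw [hzero]
    rw [lintegral_zero, Set.indicator_of_notMem hθ]


lemma lemAux_mem_iff {m : ℕ} (hm : 1 ≤ m) {r θ : ℝ} (hr : 0 < r) :
    ‖(((r * Real.cos θ : ℝ) : ℂ) + ((r * Real.sin θ : ℝ) : ℂ) * Complex.I) ^ m - 1‖ < 1
      ↔ r ^ m < 2 * Real.cos (m * θ) := by
  have hw : (((r * Real.cos θ : ℝ) : ℂ) + ((r * Real.sin θ : ℝ) : ℂ) * Complex.I)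
      = (r : ℂ) * Complex.exp (θ * Complex.I) := by
    rw [Complex.exp_mul_I]
    push_cast
    ring
  have hpow : (((r * Real.cos θ : ℝ) : ℂ) + ((r * Real.sin θ : ℝ) : ℂ) * Complex.I) ^ m - 1
      = ((r ^ m * Real.cos (m * θ) - 1 : ℝ) : ℂ)
        + ((r ^ m * Real.sin (m * θ) : ℝ) : ℂ) * Complex.I := by
    rw [hw, mul_pow, ← Complex.exp_nat_mul,
      show ((m : ℂ) * ((θ : ℂ) * Complex.I)) = ((m * θ : ℝ) : ℂ) * Complex.I by push_cast; ring,
      Complex.exp_mul_I]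
    push_cast
    ring
  rw [hpow, Complex.norm_add_mul_I, Real.sqrt_lt' one_pos]
  have hsc := Real.sin_sq_add_cos_sq ((m:ℝ) * θ)
  have hp : 0 < r ^ m := pow_pos hr m
  have hkey : (r ^ m) ^ 2 * (Real.sin ((m:ℝ) * θ) ^ 2 + Real.cos ((m:ℝ) * θ) ^ 2)
      = (r ^ m) ^ 2 := by rw [hsc, mul_one]
  constructor
  · intro hlt
    nlinarith [hkey, hp]
  · intro hlt
    nlinarith [hkey, hp]

end LemniscateAux

/-- The area of the `m`-leafed lemniscate region `{w : |wᵐ - 1| < 1}` is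
`2^{2/m - 1} √π Γ(1/m + 1/2) / Γ(1/m + 1)`. -/
theorem lemniscate_area (m : ℕ) (hm : 2 ≤ m) :
    volume {w : ℂ | ‖w ^ m - 1‖ < 1} =
      ENNReal.ofReal ((2 : ℝ) ^ ((2 / (m : ℝ)) - 1) * Real.sqrt π *
        Real.Gamma (1 / (m : ℝ) + 1 / 2) / Real.Gamma (1 / (m : ℝ) + 1)) := by
  have hm0 : 0 < m := by omega
  have hm0' : (0 : ℝ) < m := by exact_mod_cast hm0
  have hmne : (m : ℝ) ≠ 0 := ne_of_gt hm0'
  have hsexp : (0 : ℝ) < 2 / m := by positivity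
  set S : Set ℂ := {w : ℂ | ‖w ^ m - 1‖ < 1} with hSdef
  have hSopen : IsOpen S :=
    isOpen_lt (((continuous_pow m).sub continuous_const).norm) continuous_const
  set S₂ : Set (ℝ × ℝ) := Complex.measurableEquivRealProd.symm ⁻¹' S with hS₂def
  have h1 : volume S₂ = volume S :=
    (MeasurePreserving.symm _ Complex.volume_preserving_equiv_real_prod).measure_preimage
      hSopen.measurableSet.nullMeasurableSet
  set T : Set (ℝ × ℝ) :=
    (Set.Ioi (0:ℝ) ×ˢ Set.Ioo (-π) π) ∩ {p : ℝ × ℝ | p.1 ^ m < 2 * Real.cos (m * p.2)} with hTdef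
  have hTmeas : MeasurableSet T := by
    apply (measurableSet_Ioi.prod measurableSet_Ioo).inter
    exact (isOpen_lt (by fun_prop) (by fun_prop)).measurableSet
  -- membership characterisation
  have hmem : ∀ p : ℝ × ℝ, p ∈ polarCoord.target →
      (polarCoord.symm p ∈ S₂ ↔ p.1 ^ m < 2 * Real.cos (m * p.2)) := by
    rintro ⟨r, θ⟩ hp
    have hr : 0 < r := hp.1
    simp only [hS₂def, hSdef, polarCoord_symm_apply, Set.mem_preimage, Set.mem_setOf_eq,
      Complex.measurableEquivRealProd_symm_apply]
    rw [Complex.mk_eq_add_mul_I]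
    exact lemAux_mem_iff (by omega) hr
  -- image description
  have himage : polarCoord.symm '' T = S₂ ∩ polarCoord.source := by
    apply Set.Subset.antisymm
    · rintro x ⟨p, hpT, rfl⟩
      have hptgt : p ∈ polarCoord.target := hpT.1
      exact ⟨(hmem p hptgt).mpr hpT.2, polarCoord.map_target hptgt⟩
    · rintro x ⟨hxS, hxsrc⟩
      refine ⟨polarCoord x, ⟨polarCoord.map_source hxsrc, ?_⟩, polarCoord.left_inv hxsrc⟩
      apply (hmem _ (polarCoord.map_source hxsrc)).mp
      rw [polarCoord.left_inv hxsrc]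
      exact hxS
  -- removing the slit does not change the measure
  have h2 : volume S₂ = volume (S₂ ∩ polarCoord.source) := by
    have hnull : volume polarCoord.sourceᶜ = 0 :=
      MeasureTheory.ae_eq_univ.mp polarCoord_source_ae_eq_univ
    have hdiff : volume (S₂ \ polarCoord.source) = 0 :=
      measure_mono_null (Set.diff_subset_compl _ _) hnull
    have hsum := measure_inter_add_diff (μ := volume) S₂
      polarCoord.open_source.measurableSet
    rw [hdiff, add_zero] at hsum
    exact hsum.symm
  -- Jacobian change of variables
  set B : ℝ × ℝ → ℝ × ℝ →L[ℝ] ℝ × ℝ := fun p =>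
    LinearMap.toContinuousLinearMap (Matrix.toLin (Module.Basis.finTwoProd ℝ) (Module.Basis.finTwoProd ℝ)
      !![Real.cos p.2, -p.1 * Real.sin p.2; Real.sin p.2, p.1 * Real.cos p.2]) with hBdef
  have hBdet : ∀ p : ℝ × ℝ, (B p).det = p.1 := by
    intro p
    conv_rhs => rw [← one_mul p.1, ← Real.cos_sq_add_sin_sq p.2]
    simp only [hBdef, neg_mul, LinearMap.det_toContinuousLinearMap, LinearMap.det_toLin,
      Matrix.det_fin_two_of, sub_neg_eq_add]
    ring
  have h3 : volume (polarCoord.symm '' T) = ∫⁻ p in T, ENNReal.ofReal p.1 := by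
    rw [← setLIntegral_one,
      lintegral_image_eq_lintegral_abs_det_fderiv_mul volume hTmeas
        (f' := B) (fun p _ => (hasFDerivAt_polarCoord_symm p).hasFDerivWithinAt)
        (polarCoord.symm.injOn.mono
          (by rw [OpenPartialHomeomorph.symm_source]; exact Set.inter_subset_left)) (fun _ => 1)]
    apply MeasureTheory.setLIntegral_congr_fun hTmeas
    intro p hp
    show ENNReal.ofReal |(B p).det| * 1 = ENNReal.ofReal p.1
    rw [hBdet, mul_one, abs_of_pos hp.1.1]
  -- Fubini
  set k : ℝ → ℝ := fun u => (max (2 * Real.cos u) 0) ^ (2 / (m : ℝ)) / 2 with hkdef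
  have hknonneg : ∀ u, 0 ≤ k u := by
    intro u
    rw [hkdef]
    positivity
  have hkcont : Continuous k := by
    apply continuous_iff_continuousAt.mpr fun x => ?_
    apply ContinuousAt.div_const
    exact (Real.continuousAt_rpow_const _ _ (Or.inr hsexp.le)).comp
      (((continuous_const.mul Real.continuous_cos).max continuous_const).continuousAt)
  have h4 : (∫⁻ p in T, ENNReal.ofReal p.1)
      = ∫⁻ θ in Set.Ioo (-π) π, ENNReal.ofReal (k ((m : ℝ) * θ)) := by
    rw [← lintegral_indicator hTmeas, ← lintegral_indicator measurableSet_Ioo,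
      MeasureTheory.Measure.volume_eq_prod ℝ ℝ,
      MeasureTheory.lintegral_prod_symm' _ ((measurable_fst.ennreal_ofReal).indicator hTmeas)]
    apply lintegral_congr
    intro θ
    simp only [hkdef]
    exact lemAux_slice m (by omega) θ
  have h5 : (∫⁻ θ in Set.Ioo (-π) π, ENNReal.ofReal (k ((m : ℝ) * θ)))
      = ENNReal.ofReal (∫ θ in (-π)..π, k ((m : ℝ) * θ)) := by
    rw [intervalIntegral.integral_of_le (by linarith [Real.pi_pos]),
      MeasureTheory.integral_Ioc_eq_integral_Ioo,
      MeasureTheory.ofReal_integral_eq_lintegral_ofReal]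
    · exact ((hkcont.comp (continuous_const.mul continuous_id)).intervalIntegrable
        (-π) π).1.mono_set Set.Ioo_subset_Ioc_self
    · exact Filter.Eventually.of_forall fun θ => hknonneg _
  have hper : Function.Periodic k (2 * π) := by
    intro x
    simp only [hkdef]
    rw [Real.cos_add_two_pi]
  have hint : ∀ t₁ t₂ : ℝ, IntervalIntegrable k volume t₁ t₂ := fun t₁ t₂ =>
    hkcont.intervalIntegrable _ _
  have h6 : (∫ θ in (-π)..π, k ((m : ℝ) * θ)) = ∫ u in (-π)..π, k u := by
    rw [intervalIntegral.integral_comp_mul_left k hmne]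
    have hzs := hper.intervalIntegral_add_zsmul_eq (m : ℤ) ((m : ℝ) * (-π)) hint
    rw [show (m : ℝ) * (-π) + (m : ℤ) • (2 * π) = (m : ℝ) * π by rw [zsmul_eq_mul]; push_cast; ring] at hzs
    rw [hzs, hper.intervalIntegral_add_eq ((m : ℝ) * (-π)) (-π),
      show -π + 2 * π = π by ring, zsmul_eq_mul, smul_eq_mul]
    push_cast
    field_simp
  have h7 : (∫ u in (-π)..π, k u)
      = 2 ^ (2 / (m : ℝ)) / 2 * ∫ u in (-(π/2))..(π/2), Real.cos u ^ (2 / (m : ℝ)) := by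
    have hsplit1 : (∫ u in (-π)..π, k u)
        = (∫ u in (-π)..(-(π/2)), k u) + ∫ u in (-(π/2))..π, k u :=
      (intervalIntegral.integral_add_adjacent_intervals (hint _ _) (hint _ _)).symm
    have hsplit2 : (∫ u in (-(π/2))..π, k u)
        = (∫ u in (-(π/2))..(π/2), k u) + ∫ u in (π/2)..π, k u :=
      (intervalIntegral.integral_add_adjacent_intervals (hint _ _) (hint _ _)).symm
    have hz1 : (∫ u in (-π)..(-(π/2)), k u) = 0 := by
      rw [show (0:ℝ) = ∫ u in (-π)..(-(π/2)), (0:ℝ) by simp]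
      apply intervalIntegral.integral_congr
      intro u hu
      rw [Set.uIcc_of_le (by linarith [Real.pi_pos])] at hu
      have hcos : Real.cos u ≤ 0 := by
        rw [← Real.cos_neg]
        exact Real.cos_nonpos_of_pi_div_two_le_of_le (by linarith [hu.2])
          (by linarith [hu.1, Real.pi_pos])
      simp only [hkdef]
      rw [max_eq_right (by linarith), Real.zero_rpow hsexp.ne']
      norm_num
    have hz2 : (∫ u in (π/2)..π, k u) = 0 := by
      rw [show (0:ℝ) = ∫ u in (π/2)..π, (0:ℝ) by simp]
      apply intervalIntegral.integral_congr
      intro u hu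
      rw [Set.uIcc_of_le (by linarith [Real.pi_pos])] at hu
      have hcos : Real.cos u ≤ 0 :=
        Real.cos_nonpos_of_pi_div_two_le_of_le hu.1 (by linarith [hu.2, Real.pi_pos])
      simp only [hkdef]
      rw [max_eq_right (by linarith), Real.zero_rpow hsexp.ne']
      norm_num
    have hmid : (∫ u in (-(π/2))..(π/2), k u)
        = ∫ u in (-(π/2))..(π/2), 2 ^ (2 / (m : ℝ)) / 2 * Real.cos u ^ (2 / (m : ℝ)) := by
      apply intervalIntegral.integral_congr
      intro u hu
      rw [Set.uIcc_of_le (by linarith [Real.pi_pos])] at hu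
      have hcos : 0 ≤ Real.cos u := Real.cos_nonneg_of_mem_Icc hu
      simp only [hkdef]
      rw [max_eq_left (by linarith), Real.mul_rpow (by norm_num) hcos]
      ring
    rw [hsplit1, hsplit2, hz1, hz2, hmid, intervalIntegral.integral_const_mul]
    ring
  rw [← h1, h2, ← himage, h3, h4, h5, h6, h7, lemAux_integral_cos_rpow hsexp]
  congr 1
  rw [show (2 / (m:ℝ)) / 2 = 1 / (m:ℝ) by ring,
    Real.rpow_sub (by norm_num : (0:ℝ) < 2), Real.rpow_one]
  ring
end

section
/- If f(z) = Σ_{n=0}^∞ a_n z^n is analytic on the closed unit disk, then ∫_0^{2π} ∫_0^{2π} |f(e^{iφ}) - f(e^{iθ})|² / |e^{iφ} - e^{iθ}|² dθ dφ = 4π² Σ_{n=1}^∞ n |a_n|². -/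
open Complex Real intervalIntegral

noncomputable section DIBaux

namespace DIB

def E (t : ℝ) : ℂ := Complex.exp (t * Complex.I)

lemma normE (t : ℝ) : ‖E t‖ = 1 := by
  simp [E, Complex.norm_exp_ofReal_mul_I]

lemma contE : Continuous E :=
  Complex.continuous_exp.comp (Complex.continuous_ofReal.mul continuous_const)

lemma tsum_succ_shift {α : Type*} [AddCommMonoid α] [TopologicalSpace α] [T2Space α]
    (u : ℕ → α) (h0 : u 0 = 0) : ∑' n, u (n + 1) = ∑' n, u n := by
  have hinj : Function.Injective (fun n : ℕ => n + 1) := fun a b h => by simpa using h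
  refine hinj.tsum_eq ?_
  intro x hx
  rcases x with _ | m
  · exact absurd h0 hx
  · exact ⟨m, rfl⟩

/-- The equivalence `(Σ n, Fin (n+1)) ≃ ℕ × ℕ`, `⟨n, k⟩ ↦ (n - k, k)`. -/
def σe : (Σ n : ℕ, Fin (n + 1)) ≃ ℕ × ℕ where
  toFun x := (x.1 - x.2.1, x.2.1)
  invFun p := ⟨p.1 + p.2, ⟨p.2, by omega⟩⟩
  left_inv := by
    rintro ⟨n, ⟨k, hk2⟩⟩
    have hk : k ≤ n := Nat.lt_succ_iff.mp hk2
    have h : n - k + k = n := Nat.sub_add_cancel hk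
    exact Sigma.ext h ((Fin.heq_ext_iff (congrArg (· + 1) h)).2 rfl)
  right_inv := by
    rintro ⟨m, k⟩
    simp

lemma σe_fst_add_snd (x : Σ n : ℕ, Fin (n + 1)) :
    (σe x).1 + (σe x).2 = x.1 := by
  rcases x with ⟨n, k⟩
  have hk : k.1 ≤ n := by omega
  simpa [σe] using Nat.sub_add_cancel hk

lemma integral_orth (n m : ℕ) :
    (∫ θ in (0:ℝ)..(2 * π), E θ ^ n * (starRingEnd ℂ) (E θ ^ m)) =
      if n = m then (2 * π : ℂ) else 0 := by
  have key : ∀ θ : ℝ, E θ ^ n * (starRingEnd ℂ) (E θ ^ m) =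
      Complex.exp ((((n : ℝ) - (m : ℝ)) * Complex.I) * θ) := by
    intro θ
    rw [E, ← Complex.exp_nat_mul, ← Complex.exp_nat_mul, ← Complex.exp_conj,
      ← Complex.exp_add]
    congr 1
    simp only [map_mul, map_natCast, Complex.conj_ofReal, Complex.conj_I]
    push_cast
    ring
  simp only [key]
  rcases eq_or_ne n m with h | h
  · subst h
    simp only [sub_self, zero_mul, Complex.exp_zero, if_pos rfl]
    simp [mul_comm]
  · rw [if_neg h]
    have hc : (((n : ℝ) - (m : ℝ)) * Complex.I) ≠ 0 := by
      apply mul_ne_zero _ Complex.I_ne_zero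
      rw [ne_eq, ← Complex.ofReal_sub, Complex.ofReal_eq_zero, sub_eq_zero]
      exact_mod_cast h
    have hcc : (((n:ℝ) - (m:ℝ) : ℂ)) ≠ 0 := by
      intro hh; exact hc (by rw [hh, zero_mul])
    rw [integral_exp_mul_complex hc]
    set k : ℤ := (n : ℤ) - (m : ℤ) with hk
    have h1 : (((n : ℝ) - (m : ℝ)) * Complex.I) * ((2 * π : ℝ) : ℂ) =
        (k : ℂ) * (2 * π * Complex.I) := by
      rw [hk]; push_cast; ring
    rw [h1, Complex.exp_int_mul_two_pi_mul_I]
    simp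

lemma lemA (c : ℕ → ℂ) (hc : Summable fun n => ‖c n‖) :
    ∫ θ in (0:ℝ)..(2 * π), ‖∑' n, c n * E θ ^ n‖ ^ 2 = 2 * π * ∑' n, ‖c n‖ ^ 2 := by
  have hπ : (0:ℝ) ≤ 2 * π := by positivity
  set h : ℝ → ℂ := fun θ => ∑' n, c n * E θ ^ n with hh
  have hnorm : ∀ (θ : ℝ) (n : ℕ), ‖c n * E θ ^ n‖ = ‖c n‖ := by
    intro θ n; rw [norm_mul, norm_pow, normE]; simp
  have hsum_t : ∀ θ : ℝ, Summable (fun n => ‖c n * E θ ^ n‖) := fun θ => by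
    simp only [hnorm]; exact hc
  set F : ℕ × ℕ → ℝ → ℂ :=
    fun p θ => (c p.1 * E θ ^ p.1) * (starRingEnd ℂ) (c p.2 * E θ ^ p.2) with hF
  have step1 : ∀ θ : ℝ, h θ * (starRingEnd ℂ) (h θ) = ∑' p : ℕ × ℕ, F p θ := by
    intro θ
    have hconj : (starRingEnd ℂ) (h θ) = ∑' n, (starRingEnd ℂ) (c n * E θ ^ n) := by
      simp only [hh, ← Complex.star_def]
      exact tsum_star
    rw [hconj, hh]
    exact tsum_mul_tsum_of_summable_norm (hsum_t θ)
      (by simp only [RCLike.norm_conj]; exact hsum_t θ)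
  have hFint : ∀ p : ℕ × ℕ, MeasureTheory.IntegrableOn (F p) (Set.Ioc (0:ℝ) (2*π)) := by
    intro p
    apply Continuous.integrableOn_Ioc
    exact ((continuous_const.mul (contE.pow _)).mul
      (Complex.continuous_conj.comp (continuous_const.mul (contE.pow _))))
  have hFnorm : ∀ (p : ℕ × ℕ) (θ : ℝ), ‖F p θ‖ = ‖c p.1‖ * ‖c p.2‖ := by
    intro p θ
    rw [hF]
    simp only
    rw [norm_mul, RCLike.norm_conj, hnorm, hnorm]
  have hnormint : ∀ p : ℕ × ℕ,
      (∫ θ in Set.Ioc (0:ℝ) (2*π), ‖F p θ‖) = (2*π) * (‖c p.1‖ * ‖c p.2‖) := by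
    intro p
    simp only [hFnorm]
    rw [MeasureTheory.setIntegral_const, Real.volume_real_Ioc, smul_eq_mul,
      max_eq_left (by linarith)]
    ring
  have hsum_int : Summable (fun p : ℕ × ℕ => ∫ θ in Set.Ioc (0:ℝ) (2*π), ‖F p θ‖) := by
    simp only [hnormint]
    exact ((hc.mul_of_nonneg hc (fun n => norm_nonneg _) (fun n => norm_nonneg _))).mul_left _
  have interchange :=
    MeasureTheory.integral_tsum_of_summable_integral_norm
      (μ := MeasureTheory.volume.restrict (Set.Ioc (0:ℝ) (2*π))) hFint hsum_int
  have hFval : ∀ p : ℕ × ℕ, (∫ θ in Set.Ioc (0:ℝ) (2*π), F p θ) =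
      (c p.1 * (starRingEnd ℂ) (c p.2)) * (if p.1 = p.2 then (2*π:ℂ) else 0) := by
    intro p
    rw [← intervalIntegral.integral_of_le hπ]
    have hpt : ∀ θ : ℝ, F p θ =
        (c p.1 * (starRingEnd ℂ) (c p.2)) * (E θ ^ p.1 * (starRingEnd ℂ) (E θ ^ p.2)) := by
      intro θ; rw [hF]; simp only [map_mul]; ring
    simp only [hpt]
    rw [intervalIntegral.integral_const_mul, integral_orth]
  have hdiag : (∑' p : ℕ × ℕ,
        (c p.1 * (starRingEnd ℂ) (c p.2)) * (if p.1 = p.2 then (2*π:ℂ) else 0))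
      = (((∑' n : ℕ, ‖c n‖ ^ 2 : ℝ)) : ℂ) * (2*π) := by
    have hinj : Function.Injective (fun n : ℕ => ((n, n) : ℕ × ℕ)) :=
      fun a b hab => congrArg Prod.fst hab
    rw [← hinj.tsum_eq ?_]
    · have : ∀ n : ℕ, (c n * (starRingEnd ℂ) (c n)) * (if n = n then (2*π:ℂ) else 0)
          = ((‖c n‖ ^ 2 : ℝ) : ℂ) * (2*π) := by
        intro n
        rw [if_pos rfl, Complex.mul_conj]
        norm_cast
        rw [Complex.sq_norm]
      rw [tsum_congr this, tsum_mul_right, Complex.ofReal_tsum]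
    · intro x hx
      rcases x with ⟨i, j⟩
      rcases eq_or_ne i j with hij | hij
      · exact ⟨i, by rw [hij]⟩
      · exact absurd (by simp [if_neg hij]) hx
  have key : ((∫ θ in (0:ℝ)..(2*π), ‖h θ‖ ^ 2 : ℝ) : ℂ)
      = (((2 * π * ∑' n, ‖c n‖ ^ 2 : ℝ)) : ℂ) := by
    rw [← intervalIntegral.integral_ofReal]
    have hpt : ∀ θ : ℝ, ((‖h θ‖ ^ 2 : ℝ) : ℂ) = h θ * (starRingEnd ℂ) (h θ) := by
      intro θ
      rw [Complex.mul_conj]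
      norm_cast
      rw [Complex.sq_norm]
    rw [intervalIntegral.integral_congr (fun θ _ => hpt θ)]
    simp only [step1]
    rw [intervalIntegral.integral_of_le hπ, ← interchange]
    rw [tsum_congr hFval, hdiag]
    push_cast
    ring
  exact_mod_cast key

lemma tsum_nat_prod_eq {α : Type*} [AddCommGroup α] [UniformSpace α] [IsUniformAddGroup α]
    [T0Space α] [CompleteSpace α] (F : ℕ × ℕ → α) (hF : Summable F) :
    ∑' p : ℕ × ℕ, F p = ∑' n : ℕ, ∑ k ∈ Finset.range (n + 1), F (n - k, k) := by
  rw [← σe.tsum_eq F]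
  rw [Summable.tsum_sigma (f := fun x => F (σe x)) (hF.comp_injective σe.injective)]
  apply tsum_congr; intro n
  rw [tsum_fintype, ← Fin.sum_univ_eq_sum_range (fun k => F (n - k, k))]
  rfl

end DIB

set_option maxHeartbeats 2000000 in
open DIB in
/-- For `f(z) = Σ aₙ zⁿ` analytic on a neighborhood of the closed unit disk,
`∫∫ |f(e^{iφ}) - f(e^{iθ})|²/|e^{iφ} - e^{iθ}|² dθ dφ = 4π² Σ n |aₙ|²`. -/
theorem double_integral_boundary (R : ℝ) (hR : 1 < R) (f : ℂ → ℂ) (a : ℕ → ℂ)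
    (hsum : ∀ z : ℂ, ‖z‖ < R → HasSum (fun n : ℕ => a n * z ^ n) (f z)) :
    (∫ φ in (0:ℝ)..(2 * π), ∫ θ in (0:ℝ)..(2 * π),
        ‖f (Complex.exp (φ * Complex.I)) - f (Complex.exp (θ * Complex.I))‖ ^ 2 /
          ‖Complex.exp (φ * Complex.I) - Complex.exp (θ * Complex.I)‖ ^ 2) =
      4 * π ^ 2 * ∑' n : ℕ, (n : ℝ) * ‖a n‖ ^ 2 := by
  have hE : ∀ t : ℝ, Complex.exp ((t : ℂ) * Complex.I) = E t := fun _ => rfl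
  simp only [hE]
  have hπ : (0:ℝ) ≤ 2 * π := by positivity
  -- geometric bound on coefficients
  set r : ℝ := (1 + R) / 2 with hr
  have hr1 : 1 < r := by rw [hr]; linarith
  have hrR : r < R := by rw [hr]; linarith
  have hr0 : 0 < r := by linarith
  have hs : Summable fun n => a n * (r:ℂ) ^ n := by
    refine (hsum r ?_).summable
    rw [Complex.norm_real, Real.norm_of_nonneg hr0.le]; exact hrR
  obtain ⟨C, hC⟩ : ∃ C : ℝ, ∀ n, ‖a n‖ * r ^ n ≤ C := by
    have h0 : Filter.Tendsto (fun n => ‖a n * (r:ℂ) ^ n‖) Filter.atTop (nhds 0) := by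
      simpa using hs.tendsto_atTop_zero.norm
    obtain ⟨C, hC⟩ := h0.bddAbove_range
    refine ⟨C, fun n => ?_⟩
    have h1 := hC (Set.mem_range_self n)
    simpa [norm_mul, norm_pow, Complex.norm_real, _root_.abs_of_nonneg hr0.le] using h1
  have hC0 : 0 ≤ C := le_trans (by positivity) (hC 0)
  set q : ℝ := r⁻¹ with hqdef
  have hq0 : 0 < q := inv_pos.mpr hr0
  have hq1 : q < 1 := by rw [hqdef]; exact inv_lt_one_of_one_lt₀ hr1
  have hA : ∀ n, ‖a n‖ ≤ C * q ^ n := by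
    intro n
    have hrn : (0:ℝ) < r ^ n := pow_pos hr0 n
    have h1 : ‖a n‖ = (‖a n‖ * r ^ n) * q ^ n := by
      rw [hqdef, inv_pow]; field_simp
    rw [h1]
    exact mul_le_mul_of_nonneg_right (hC n) (le_of_lt (pow_pos hq0 n))
  have hgeo : ∀ s : ℝ, 0 ≤ s → s < 1 → ∀ D : ℝ, 0 ≤ D →
      Summable (fun p : ℕ × ℕ => D * s ^ p.1 * s ^ p.2) := by
    intro s hs0 hs1 D hD
    exact Summable.mul_of_nonneg
      ((summable_geometric_of_lt_one hs0 hs1).mul_left D)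
      (summable_geometric_of_lt_one hs0 hs1)
      (fun n => by positivity) (fun n => by positivity)
  have hbound : ∀ p : ℕ × ℕ, ‖a (p.1 + p.2 + 1)‖ ≤ C * q ^ p.1 * q ^ p.2 := by
    intro p
    calc ‖a (p.1 + p.2 + 1)‖ ≤ C * q ^ (p.1 + p.2 + 1) := hA _
      _ ≤ C * q ^ p.1 * q ^ p.2 := by
          rw [pow_add, pow_add, pow_one]
          have h2 : q ^ p.1 * q ^ p.2 * q ≤ q ^ p.1 * q ^ p.2 :=
            mul_le_of_le_one_right (by positivity) hq1.le
          calc C * (q ^ p.1 * q ^ p.2 * q) ≤ C * (q ^ p.1 * q ^ p.2) :=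
                mul_le_mul_of_nonneg_left h2 hC0
            _ = C * q ^ p.1 * q ^ p.2 := by ring
  have hP : Summable (fun p : ℕ × ℕ => ‖a (p.1 + p.2 + 1)‖) :=
    Summable.of_nonneg_of_le (fun p => norm_nonneg _) hbound (hgeo q hq0.le hq1 C hC0)
  have hP2 : Summable (fun p : ℕ × ℕ => ‖a (p.1 + p.2 + 1)‖ ^ 2) := by
    refine Summable.of_nonneg_of_le (fun p => by positivity) ?_
      (hgeo (q ^ 2) (by positivity) (by nlinarith) (C ^ 2) (by positivity))
    intro p
    calc ‖a (p.1 + p.2 + 1)‖ ^ 2 ≤ (C * q ^ p.1 * q ^ p.2) ^ 2 :=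
          pow_le_pow_left₀ (norm_nonneg _) (hbound p) 2
      _ = C ^ 2 * (q ^ 2) ^ p.1 * (q ^ 2) ^ p.2 := by ring
  have hPk : ∀ m : ℕ, Summable (fun k => ‖a (m + k + 1)‖) := fun m => hP.prod_factor m
  have hPk2 : ∀ m : ℕ, Summable (fun k => ‖a (m + k + 1)‖ ^ 2) := fun m => hP2.prod_factor m
  have hB : Summable (fun m => ∑' k, ‖a (m + k + 1)‖) :=
    ((summable_prod_of_nonneg (f := fun p : ℕ × ℕ => ‖a (p.1 + p.2 + 1)‖)
      (fun p => norm_nonneg _)).mp hP).2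
  have hB2 : Summable (fun m => ∑' k, ‖a (m + k + 1)‖ ^ 2) :=
    ((summable_prod_of_nonneg (f := fun p : ℕ × ℕ => ‖a (p.1 + p.2 + 1)‖ ^ 2)
      (fun p => by positivity)).mp hP2).2
  set d : ℕ → ℝ → ℂ := fun m φ => ∑' k, a (m + k + 1) * E φ ^ k with hd
  set g : ℝ → ℝ → ℂ :=
    fun φ θ => ∑' p : ℕ × ℕ, a (p.1 + p.2 + 1) * E φ ^ p.2 * E θ ^ p.1 with hgdef
  have hTnorm : ∀ (φ θ : ℝ) (p : ℕ × ℕ),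
      ‖a (p.1 + p.2 + 1) * E φ ^ p.2 * E θ ^ p.1‖ = ‖a (p.1 + p.2 + 1)‖ := by
    intro φ θ p; rw [norm_mul, norm_mul, norm_pow, norm_pow, normE, normE]; simp
  have hTsum : ∀ φ θ : ℝ,
      Summable (fun p : ℕ × ℕ => a (p.1 + p.2 + 1) * E φ ^ p.2 * E θ ^ p.1) := by
    intro φ θ
    apply Summable.of_norm
    simp only [hTnorm]; exact hP
  have claim1 : ∀ φ θ : ℝ, g φ θ = ∑' m, d m φ * E θ ^ m := by
    intro φ θ
    rw [hgdef]; simp only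
    rw [Summable.tsum_prod (hTsum φ θ)]
    apply tsum_congr; intro m
    rw [hd]; simp only
    rw [← tsum_mul_right]
  have claim2 : ∀ φ θ : ℝ, (E φ - E θ) * g φ θ = f (E φ) - f (E θ) := by
    intro φ θ
    have hEφ : ‖E φ‖ < R := by rw [normE]; linarith
    have hEθ : ‖E θ‖ < R := by rw [normE]; linarith
    have hsφ := hsum _ hEφ
    have hsθ := hsum _ hEθ
    rw [hgdef]; simp only
    rw [tsum_nat_prod_eq _ (hTsum φ θ), ← tsum_mul_left]
    have hfe : ∀ n : ℕ, (E φ - E θ) *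
        (∑ k ∈ Finset.range (n + 1), a ((n - k) + k + 1) * E φ ^ k * E θ ^ (n - k))
        = a (n + 1) * E φ ^ (n + 1) - a (n + 1) * E θ ^ (n + 1) := by
      intro n
      have hterm : (∑ k ∈ Finset.range (n + 1), a ((n - k) + k + 1) * E φ ^ k * E θ ^ (n - k))
          = a (n + 1) * ∑ k ∈ Finset.range (n + 1), E φ ^ k * E θ ^ (n + 1 - 1 - k) := by
        rw [Finset.mul_sum]
        apply Finset.sum_congr rfl
        intro k hk
        have hkn : k ≤ n := Nat.lt_succ_iff.mp (Finset.mem_range.mp hk)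
        rw [Nat.sub_add_cancel hkn, Nat.add_sub_cancel]
        exact mul_assoc _ _ _
      rw [hterm]
      have hg2 := geom_sum₂_mul (E φ) (E θ) (n + 1)
      calc (E φ - E θ) * (a (n+1) * ∑ k ∈ Finset.range (n+1), E φ ^ k * E θ ^ (n+1-1-k))
          = (∑ k ∈ Finset.range (n+1), E φ ^ k * E θ ^ (n+1-1-k)) * (E φ - E θ) * a (n+1) := by
            ring
        _ = (E φ ^ (n+1) - E θ ^ (n+1)) * a (n+1) := by rw [hg2]
        _ = _ := by ring
    rw [tsum_congr hfe]
    exact (tsum_succ_shift (fun n => a n * E φ ^ n - a n * E θ ^ n) (by simp)).trans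
      ((hsφ.sub hsθ).tsum_eq)
  have claim3 : ∀ φ θ : ℝ, E φ ≠ E θ →
      ‖f (E φ) - f (E θ)‖ ^ 2 / ‖E φ - E θ‖ ^ 2 = ‖g φ θ‖ ^ 2 := by
    intro φ θ hne
    rw [← claim2 φ θ, norm_mul, mul_pow]
    have h0 : ‖E φ - E θ‖ ^ 2 ≠ 0 := by
      apply pow_ne_zero
      simpa [sub_eq_zero] using hne
    rw [mul_comm, mul_div_assoc, div_self h0, mul_one]
  have claim4 : ∀ φ : ℝ,
      (∫ θ in (0:ℝ)..(2 * π), ‖f (E φ) - f (E θ)‖ ^ 2 / ‖E φ - E θ‖ ^ 2)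
        = ∫ θ in (0:ℝ)..(2 * π), ‖g φ θ‖ ^ 2 := by
    intro φ
    apply intervalIntegral.integral_congr_ae
    have hS : Set.Countable {θ : ℝ | E θ = E φ} := by
      apply Set.Countable.mono ?_ (Set.countable_range (fun k : ℤ => φ + k * (2 * π)))
      intro θ hθ
      rw [Set.mem_setOf_eq, E, E, Complex.exp_eq_exp_iff_exists_int] at hθ
      obtain ⟨k, hk⟩ := hθ
      refine ⟨k, ?_⟩
      have h2 : ((φ + k * (2 * π) : ℝ) : ℂ) * Complex.I = (θ : ℂ) * Complex.I := by
        rw [hk]; push_cast; ring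
      have h3 : ((φ + k * (2 * π) : ℝ) : ℂ) = (θ : ℂ) :=
        mul_right_cancel₀ Complex.I_ne_zero h2
      exact_mod_cast h3
    have hvol : MeasureTheory.volume {θ : ℝ | E θ = E φ} = 0 :=
      hS.measure_zero _
    filter_upwards [MeasureTheory.measure_eq_zero_iff_ae_notMem.mp hvol] with θ hθ _
    exact claim3 φ θ (fun h => hθ h.symm)
  have hdnormsum : ∀ φ : ℝ, Summable (fun m => ‖d m φ‖) := by
    intro φ
    apply Summable.of_nonneg_of_le (fun m => norm_nonneg _) ?_ hB
    intro m
    rw [hd]; simp only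
    calc ‖∑' k, a (m + k + 1) * E φ ^ k‖ ≤ ∑' k, ‖a (m + k + 1) * E φ ^ k‖ := by
          apply norm_tsum_le_tsum_norm
          have : ∀ k : ℕ, ‖a (m + k + 1) * E φ ^ k‖ = ‖a (m + k + 1)‖ := by
            intro k; rw [norm_mul, norm_pow, normE]; simp
          simp only [this]; exact hPk m
      _ = ∑' k, ‖a (m + k + 1)‖ := by
          apply tsum_congr; intro k; rw [norm_mul, norm_pow, normE]; simp
  have claim5 : ∀ φ : ℝ, (∫ θ in (0:ℝ)..(2 * π), ‖g φ θ‖ ^ 2)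
      = 2 * π * ∑' m, ‖d m φ‖ ^ 2 := by
    intro φ
    have h := lemA (fun m => d m φ) (hdnormsum φ)
    simp only [claim1]
    exact h
  have claim7 : ∀ m : ℕ, (∫ φ in (0:ℝ)..(2 * π), ‖d m φ‖ ^ 2)
      = 2 * π * ∑' k, ‖a (m + k + 1)‖ ^ 2 := by
    intro m
    have h := lemA (fun k => a (m + k + 1)) (hPk m)
    rw [hd]
    exact h
  have hcontd : ∀ m : ℕ, Continuous (fun φ => d m φ) := by
    intro m
    rw [hd]; simp only
    apply continuous_tsum (u := fun k => ‖a (m + k + 1)‖)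
    · exact fun k => continuous_const.mul (contE.pow k)
    · exact hPk m
    · intro k φ; rw [norm_mul, norm_pow, normE]; simp
  have hFico : ∀ m : ℕ, MeasureTheory.IntegrableOn (fun φ => ‖d m φ‖ ^ 2)
      (Set.Ioc (0:ℝ) (2 * π)) :=
    fun m => (((hcontd m).norm.pow 2)).integrableOn_Ioc
  have claim7' : ∀ m : ℕ, (∫ φ in Set.Ioc (0:ℝ) (2 * π), ‖d m φ‖ ^ 2)
      = 2 * π * ∑' k, ‖a (m + k + 1)‖ ^ 2 := by
    intro m
    rw [← intervalIntegral.integral_of_le hπ]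
    exact claim7 m
  have hsumint : Summable (fun m => ∫ φ in Set.Ioc (0:ℝ) (2 * π), ‖(‖d m φ‖ ^ 2 : ℝ)‖) := by
    have heq : ∀ m : ℕ, (∫ φ in Set.Ioc (0:ℝ) (2 * π), ‖(‖d m φ‖ ^ 2 : ℝ)‖)
        = 2 * π * ∑' k, ‖a (m + k + 1)‖ ^ 2 := by
      intro m
      have h1 : ∀ φ : ℝ, ‖(‖d m φ‖ ^ 2 : ℝ)‖ = ‖d m φ‖ ^ 2 := fun φ =>
        Real.norm_of_nonneg (by positivity)
      simp only [h1]
      exact claim7' m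
    simp only [heq]
    exact hB2.mul_left _
  have hinterchange :=
    MeasureTheory.integral_tsum_of_summable_integral_norm
      (μ := MeasureTheory.volume.restrict (Set.Ioc (0:ℝ) (2 * π)))
      (F := fun m (φ : ℝ) => ‖d m φ‖ ^ 2) hFico hsumint
  have hre : (∑' m : ℕ, ∑' k : ℕ, ‖a (m + k + 1)‖ ^ 2) = ∑' n : ℕ, (n : ℝ) * ‖a n‖ ^ 2 := by
    rw [← Summable.tsum_prod hP2, tsum_nat_prod_eq _ hP2]
    have hterm : ∀ n : ℕ, (∑ k ∈ Finset.range (n + 1), ‖a ((n - k) + k + 1)‖ ^ 2)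
        = ((n : ℝ) + 1) * ‖a (n + 1)‖ ^ 2 := by
      intro n
      rw [Finset.sum_congr rfl (fun k hk => by
        rw [Nat.sub_add_cancel (Nat.lt_succ_iff.mp (Finset.mem_range.mp hk))])]
      rw [Finset.sum_const, Finset.card_range, nsmul_eq_mul]
      push_cast; ring
    rw [tsum_congr hterm]
    rw [← tsum_succ_shift (fun n => (n : ℝ) * ‖a n‖ ^ 2) (by simp)]
    apply tsum_congr; intro n; push_cast; ring
  have main1 : ∀ φ : ℝ,
      (∫ θ in (0:ℝ)..(2 * π), ‖f (E φ) - f (E θ)‖ ^ 2 / ‖E φ - E θ‖ ^ 2)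
        = 2 * π * ∑' m, ‖d m φ‖ ^ 2 := fun φ => (claim4 φ).trans (claim5 φ)
  rw [intervalIntegral.integral_congr (g := fun φ => 2 * π * ∑' m, ‖d m φ‖ ^ 2)
    (fun φ _ => main1 φ)]
  rw [intervalIntegral.integral_const_mul, intervalIntegral.integral_of_le hπ,
    ← hinterchange, tsum_congr claim7', tsum_mul_left, hre]
  ring


end DIBaux
end

section
/- Let U_n(z) = sin((n+1) arccos z)/√(1 - z²) be the Chebyshev polynomial of the second kind, and let D be the open elliptical region b²x² + a²y² < a²b² with foci ±1 (so a² - b² = 1), a = cosh c, b = sinh c, c > 0. Then for n ≠ m, ∬_D U_n(z) \overline{U_m(z)} dx dy = 0. -/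
open MeasureTheory Complex Real Polynomial


lemma det_mul_complex (w : ℂ) :
    (((ContinuousLinearMap.smulRight (1 : ℂ →L[ℂ] ℂ) w).restrictScalars ℝ) : ℂ →L[ℝ] ℂ).det
      = Complex.normSq w := by
  have h : (((ContinuousLinearMap.smulRight (1 : ℂ →L[ℂ] ℂ) w).restrictScalars ℝ) : ℂ →L[ℝ] ℂ).toLinearMap
      = (Algebra.lmul ℝ ℂ) w := by
    ext z
    simp [mul_comm]
  rw [ContinuousLinearMap.det, h, ← Algebra.norm_apply, Algebra.norm_complex_apply]

lemma int_cos (k : ℤ) (hk : k ≠ 0) (d : ℂ) :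
    ∫ x in (0:ℝ)..(2*π), Complex.cos (k*x + d) = 0 := by
  have hkc : (k : ℂ) * I ≠ 0 := by
    simp [Complex.ext_iff, hk]
  have h1 : ∀ x : ℝ, Complex.cos (k*x + d)
      = (Complex.exp (d*I) * Complex.exp ((k*I)*x) + Complex.exp (-(d*I)) * Complex.exp ((-(k*I))*x)) / 2 := by
    intro x
    rw [Complex.cos, ← Complex.exp_add, ← Complex.exp_add]
    ring_nf
  simp only [h1]
  rw [intervalIntegral.integral_div]
  rw [intervalIntegral.integral_add ((Continuous.intervalIntegrable (by fun_prop) _ _))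
    ((Continuous.intervalIntegrable (by fun_prop) _ _)),
    intervalIntegral.integral_const_mul, intervalIntegral.integral_const_mul,
    integral_exp_mul_complex hkc, integral_exp_mul_complex (neg_ne_zero.2 hkc)]
  have h2 : Complex.exp ((k*I) * (2*π)) = 1 := by
    rw [show (k:ℂ)*I*(2*π) = k * (2*π*I) by ring, Complex.exp_int_mul_two_pi_mul_I]
  have h3 : Complex.exp ((-(k*I)) * (2*π)) = 1 := by
    rw [show -((k:ℂ)*I)*(2*π) = (-k : ℤ) * (2*π*I) by push_cast; ring, Complex.exp_int_mul_two_pi_mul_I]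
  have h4 : Complex.exp (-((k:ℂ)*I*(2*π))) = 1 := by
    rw [show -((k:ℂ)*I*(2*π)) = (-k : ℤ) * (2*π*I) by push_cast; ring, Complex.exp_int_mul_two_pi_mul_I]
  simp [h2, h3, h4]




lemma inner_zero (n m : ℕ) (hnm : n ≠ m) (y : ℝ) :
    ∫ x in Set.Ioo (0:ℝ) (2*π),
      Complex.sin (((n:ℂ)+1)*(x + y*I)) * (starRingEnd ℂ) (Complex.sin (((m:ℂ)+1)*(x + y*I))) = 0 := by
  have h2π : (0:ℝ) ≤ 2*π := by positivity
  have hIoo : ∫ x in Set.Ioo (0:ℝ) (2*π),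
      Complex.sin (((n:ℂ)+1)*(x + y*I)) * (starRingEnd ℂ) (Complex.sin (((m:ℂ)+1)*(x + y*I)))
      = ∫ x in (0:ℝ)..(2*π),
      Complex.sin (((n:ℂ)+1)*(x + y*I)) * (starRingEnd ℂ) (Complex.sin (((m:ℂ)+1)*(x + y*I))) := by
    rw [intervalIntegral.integral_of_le h2π, ← MeasureTheory.integral_Ioc_eq_integral_Ioo]
  rw [hIoo]
  have hprod : ∀ A B : ℂ, Complex.sin A * Complex.sin B = (Complex.cos (A-B) - Complex.cos (A+B))/2 := by
    intro A B
    have h1 := Complex.cos_sub A B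
    have h2 := Complex.cos_add A B
    linear_combination (h2 - h1)/2
  have key : ∀ x : ℝ, Complex.sin (((n:ℂ)+1)*(x + y*I)) * (starRingEnd ℂ) (Complex.sin (((m:ℂ)+1)*(x + y*I)))
      = (Complex.cos (((n:ℂ)-m)*x + ((n:ℂ)+m+2)*y*I) - Complex.cos (((n:ℂ)+m+2)*x + ((n:ℂ)-m)*y*I))/2 := by
    intro x
    have hc : (starRingEnd ℂ) (((m:ℂ)+1)*(x + y*I)) = ((m:ℂ)+1)*(x - y*I) := by
      simp only [map_mul, map_add, Complex.conj_I, Complex.conj_ofReal, Complex.conj_natCast,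
        map_one]
      ring
    rw [← Complex.sin_conj, hc, hprod]
    congr 2 <;> push_cast <;> ring
  simp only [key]
  have e₁ : ∫ x in (0:ℝ)..(2*π), Complex.cos (((n:ℂ)-m)*x + ((n:ℂ)+m+2)*y*I) = 0 := by
    have h := int_cos ((n:ℤ)-m) (by omega) (((n:ℂ)+m+2)*y*I)
    push_cast at h
    exact h
  have e₂ : ∫ x in (0:ℝ)..(2*π), Complex.cos (((n:ℂ)+m+2)*x + ((n:ℂ)-m)*y*I) = 0 := by
    have h := int_cos ((n:ℤ)+m+2) (by omega) (((n:ℂ)-m)*y*I)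
    push_cast at h
    exact h
  rw [intervalIntegral.integral_div,
    intervalIntegral.integral_sub ((Continuous.intervalIntegrable (by fun_prop) _ _))
      ((Continuous.intervalIntegrable (by fun_prop) _ _)), e₁, e₂]
  norm_num


lemma cos_formula (ζ : ℂ) : Complex.cos ζ =
    (Real.cos ζ.re * Real.cosh ζ.im : ℝ) - (Real.sin ζ.re * Real.sinh ζ.im : ℝ) * I := by
  conv_lhs => rw [← Complex.re_add_im ζ]
  rw [Complex.cos_add, Complex.cos_mul_I, Complex.sin_mul_I]
  push_cast
  ring

lemma cos_re' (ζ : ℂ) : (Complex.cos ζ).re = Real.cos ζ.re * Real.cosh ζ.im := by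
  rw [cos_formula]
  simp [Complex.cos_ofReal_re, Complex.cosh_ofReal_re]

lemma cos_im' (ζ : ℂ) : (Complex.cos ζ).im = -(Real.sin ζ.re * Real.sinh ζ.im) := by
  rw [cos_formula]
  simp [Complex.sin_ofReal_re, Complex.sinh_ofReal_re]

lemma inj_cos (c : ℝ) : Set.InjOn Complex.cos
    {ζ : ℂ | (ζ.re ∈ Set.Ioo 0 (2*π)) ∧ ζ.im ∈ Set.Ioo (-c) 0} := by
  rintro ζ₁ ⟨⟨h1a, h1b⟩, h1c, h1d⟩ ζ₂ ⟨⟨h2a, h2b⟩, h2c, h2d⟩ heq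
  rcases Complex.cos_eq_cos_iff.1 heq with ⟨k, hk | hk⟩
  · -- ζ₂ = 2kπ + ζ₁
    have hre : ζ₂.re = 2*(k:ℝ)*π + ζ₁.re := by
      rw [hk]; simp
    have him : ζ₂.im = ζ₁.im := by rw [hk]; simp
    have hπ : 0 < π := Real.pi_pos
    have hk0 : k = 0 := by
      have h1 : (-1 : ℝ) < k := by nlinarith
      have h2 : (k : ℝ) < 1 := by nlinarith
      have h1' : (-1 : ℤ) < k := by exact_mod_cast h1
      have h2' : k < 1 := by exact_mod_cast h2
      omega
    rw [hk, hk0]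
    simp
  · -- ζ₂ = 2kπ - ζ₁ : impossible since both im < 0
    have him : ζ₂.im = -ζ₁.im := by rw [hk]; simp
    linarith




lemma alg1 (A B u : ℝ) (hA : 0 < A) (hB : B < A) (hu1 : u ≤ 1) :
    A*(u*(1+B)) + (1+A)*((1-u)*B) < (1+A)*A := by
  nlinarith [mul_pos (sub_pos.2 hB) (show (0:ℝ) < 1+A-u by linarith)]

lemma alg2 (A B u : ℝ) (hA : 0 < A) (hu1 : u ≤ 1) (hAB : A ≤ B) :
    (1+A)*A ≤ A*(u*(1+B)) + (1+A)*((1-u)*B) := by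
  nlinarith [mul_nonneg (sub_nonneg.2 hAB) (show (0:ℝ) ≤ 1+A-u by linarith)]

lemma sinh_sq_lt (c y : ℝ) (hy : y ∈ Set.Ioo (-c) 0) : Real.sinh y ^ 2 < Real.sinh c ^ 2 := by
  have h1 : Real.sinh (-c) < Real.sinh y := Real.sinh_lt_sinh.2 hy.1
  have h2 : Real.sinh y < Real.sinh 0 := Real.sinh_lt_sinh.2 hy.2
  rw [Real.sinh_neg] at h1
  rw [Real.sinh_zero] at h2
  nlinarith

lemma fwd (c : ℝ) (hc : 0 < c) (ζ : ℂ) (h1 : ζ.re ∈ Set.Ioo 0 (2*π))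
    (h2 : ζ.im ∈ Set.Ioo (-c) 0) :
    Real.sinh c ^ 2 * (Complex.cos ζ).re ^ 2 + Real.cosh c ^ 2 * (Complex.cos ζ).im ^ 2 <
      Real.cosh c ^ 2 * Real.sinh c ^ 2 := by
  rw [cos_re', cos_im']
  have hB := sinh_sq_lt c ζ.im h2
  have hA : (0:ℝ) < Real.sinh c ^ 2 := by
    have := Real.sinh_pos_iff.2 hc; positivity
  have e1 : Real.cosh ζ.im ^ 2 = 1 + Real.sinh ζ.im ^ 2 := Real.cosh_sq' _
  have e2 : Real.cosh c ^ 2 = 1 + Real.sinh c ^ 2 := Real.cosh_sq' _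
  have e3 : Real.sin ζ.re ^ 2 + Real.cos ζ.re ^ 2 = 1 := Real.sin_sq_add_cos_sq _
  have e4 : Real.sin ζ.re ^ 2 = 1 - Real.cos ζ.re ^ 2 := by linarith
  have expand : Real.sinh c ^ 2 * (Real.cos ζ.re * Real.cosh ζ.im) ^ 2 +
      Real.cosh c ^ 2 * (-(Real.sin ζ.re * Real.sinh ζ.im)) ^ 2
      = Real.sinh c ^ 2 * (Real.cos ζ.re ^ 2 * (1 + Real.sinh ζ.im ^ 2)) +
        (1 + Real.sinh c ^ 2) * ((1 - Real.cos ζ.re ^ 2) * Real.sinh ζ.im ^ 2) := by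
    rw [neg_sq, mul_pow, mul_pow, e1, e2, e4]
  rw [expand, show Real.cosh c ^ 2 * Real.sinh c ^ 2
      = (1 + Real.sinh c ^ 2) * Real.sinh c ^ 2 by rw [e2]]
  exact alg1 _ _ _ hA hB (by nlinarith [sq_nonneg (Real.sin ζ.re)])

lemma im_bound (c : ℝ) (hc : 0 < c) (t y : ℝ)
    (hz : Real.sinh c ^ 2 * (Real.cos t * Real.cosh y) ^ 2 +
      Real.cosh c ^ 2 * (Real.sin t * Real.sinh y) ^ 2 <
      Real.cosh c ^ 2 * Real.sinh c ^ 2) (hy : y < 0) : -c < y := by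
  have hA : (0:ℝ) < Real.sinh c ^ 2 := by
    have := Real.sinh_pos_iff.2 hc; positivity
  have e1 : Real.cosh y ^ 2 = 1 + Real.sinh y ^ 2 := Real.cosh_sq' _
  have e2 : Real.cosh c ^ 2 = 1 + Real.sinh c ^ 2 := Real.cosh_sq' _
  have e3 : Real.sin t ^ 2 + Real.cos t ^ 2 = 1 := Real.sin_sq_add_cos_sq _
  have e4 : Real.sin t ^ 2 = 1 - Real.cos t ^ 2 := by linarith
  have expand : Real.sinh c ^ 2 * (Real.cos t * Real.cosh y) ^ 2 +
      Real.cosh c ^ 2 * (Real.sin t * Real.sinh y) ^ 2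
      = Real.sinh c ^ 2 * (Real.cos t ^ 2 * (1 + Real.sinh y ^ 2)) +
        (1 + Real.sinh c ^ 2) * ((1 - Real.cos t ^ 2) * Real.sinh y ^ 2) := by
    rw [mul_pow, mul_pow, e1, e2, e4]
  rw [expand, show Real.cosh c ^ 2 * Real.sinh c ^ 2
      = (1 + Real.sinh c ^ 2) * Real.sinh c ^ 2 by rw [e2]] at hz
  have hBA : Real.sinh y ^ 2 < Real.sinh c ^ 2 := by
    by_contra h
    push_neg at h
    exact absurd hz (not_lt.2 (alg2 _ _ _ hA (by nlinarith [sq_nonneg (Real.sin t)]) h))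
  have h5 : -Real.sinh c < Real.sinh y := by
    have hApos := Real.sinh_pos_iff.2 hc
    nlinarith
  have := Real.sinh_lt_sinh.1 (by rwa [← Real.sinh_neg] at h5)
  linarith

lemma bwd (c : ℝ) (hc : 0 < c) (z : ℂ)
    (hz : Real.sinh c ^ 2 * z.re ^ 2 + Real.cosh c ^ 2 * z.im ^ 2 <
      Real.cosh c ^ 2 * Real.sinh c ^ 2) (him : z.im ≠ 0) :
    ∃ ζ : ℂ, ((ζ.re ∈ Set.Ioo 0 (2*π)) ∧ ζ.im ∈ Set.Ioo (-c) 0) ∧ Complex.cos ζ = z := by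
  have hπ : (0:ℝ) < 2*π := by positivity
  obtain ⟨ζ₀, hζ₀⟩ := Complex.cos_surjective z
  have him0 : ζ₀.im ≠ 0 := by
    intro h
    apply him
    rw [← hζ₀, cos_im', h]
    simp
  set ζ₁ := if ζ₀.im < 0 then ζ₀ else -ζ₀ with hζ₁
  have h1 : Complex.cos ζ₁ = z := by
    rw [hζ₁]; split <;> simp [Complex.cos_neg, hζ₀]
  have hy : ζ₁.im < 0 := by
    rw [hζ₁]
    rcases lt_or_gt_of_ne him0 with h | h
    · rw [if_pos h]; exact h
    · rw [if_neg (by linarith)]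
      simp only [Complex.neg_im]
      linarith
  set t : ℝ := ζ₁.re - ⌊ζ₁.re / (2*π)⌋ * (2*π) with ht
  set ζ : ℂ := ⟨t, ζ₁.im⟩ with hζ
  have hre : ζ.re = t := rfl
  have him' : ζ.im = ζ₁.im := rfl
  have harg : ζ₁ = 2*((⌊ζ₁.re / (2*π)⌋ : ℤ) : ℂ)*(π:ℂ) + ζ := by
    apply Complex.ext
    · rw [Complex.add_re,
        show (2*((⌊ζ₁.re / (2*π)⌋ : ℤ) : ℂ)*(π:ℂ)) = ((2*(⌊ζ₁.re / (2*π)⌋ : ℝ)*π : ℝ) : ℂ) by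
          push_cast; ring,
        Complex.ofReal_re, hre, ht]
      ring
    · rw [Complex.add_im,
        show (2*((⌊ζ₁.re / (2*π)⌋ : ℤ) : ℂ)*(π:ℂ)) = ((2*(⌊ζ₁.re / (2*π)⌋ : ℝ)*π : ℝ) : ℂ) by
          push_cast; ring,
        Complex.ofReal_im, him']
      ring
  have heq : Complex.cos ζ = Complex.cos ζ₁ :=
    Complex.cos_eq_cos_iff.2 ⟨⌊ζ₁.re / (2*π)⌋, Or.inl harg⟩
  have hcz : Complex.cos ζ = z := heq.trans h1
  have ht0 : 0 ≤ t := Int.sub_floor_div_mul_nonneg ζ₁.re hπ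
  have ht2 : t < 2*π := Int.sub_floor_div_mul_lt ζ₁.re hπ
  have htne : t ≠ 0 := by
    intro h
    apply him
    rw [← hcz, cos_im', hre, h]
    simp
  refine ⟨ζ, ⟨⟨lt_of_le_of_ne ht0 (Ne.symm htne), ht2⟩, ?_, hy⟩, hcz⟩
  have hre2 : z.re = Real.cos ζ.re * Real.cosh ζ.im := by rw [← hcz, cos_re']
  have him2 : z.im = -(Real.sin ζ.re * Real.sinh ζ.im) := by rw [← hcz, cos_im']
  rw [hre2, him2, neg_sq] at hz
  exact im_bound c hc ζ.re ζ.im hz hy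


lemma det_smul_one (w : ℂ) : ((w • (1 : ℂ →L[ℝ] ℂ)) : ℂ →L[ℝ] ℂ).det = Complex.normSq w := by
  have h : ((w • (1 : ℂ →L[ℝ] ℂ))).toLinearMap = (Algebra.lmul ℝ ℂ) w := by
    ext z
    simp [mul_comm]
  rw [ContinuousLinearMap.det, h, ← Algebra.norm_apply, Algebra.norm_complex_apply]









/-- Chebyshev polynomials of the second kind are orthogonal over the elliptical
region `b²x² + a²y² < a²b²` with `a = cosh c`, `b = sinh c`. -/
theorem chebyshevU_orthogonal_ellipse (c : ℝ) (hc : 0 < c) (n m : ℕ) (hnm : n ≠ m) :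
    (∫ z in {z : ℂ | (Real.sinh c) ^ 2 * z.re ^ 2 + (Real.cosh c) ^ 2 * z.im ^ 2 <
        (Real.cosh c) ^ 2 * (Real.sinh c) ^ 2},
      (Polynomial.Chebyshev.U ℂ n).eval z *
        (starRingEnd ℂ) ((Polynomial.Chebyshev.U ℂ m).eval z)) = 0 := by
  set g : ℂ → ℂ := fun z => (Polynomial.Chebyshev.U ℂ (n:ℤ)).eval z *
    (starRingEnd ℂ) ((Polynomial.Chebyshev.U ℂ (m:ℤ)).eval z) with hg
  set E : Set ℂ := {z : ℂ | (Real.sinh c) ^ 2 * z.re ^ 2 + (Real.cosh c) ^ 2 * z.im ^ 2 <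
        (Real.cosh c) ^ 2 * (Real.sinh c) ^ 2} with hE
  set s : Set ℂ := Complex.re ⁻¹' (Set.Ioo 0 (2*π)) ∩ Complex.im ⁻¹' (Set.Ioo (-c) 0) with hsdef
  -- the real line is null
  have hnull : volume {z : ℂ | z.im = 0} = 0 := by
    have h1 : {z : ℂ | z.im = 0} = (LinearMap.ker Complex.imLm : Set ℂ) := by
      ext z; simp [LinearMap.mem_ker]
    rw [h1]
    apply Measure.addHaar_submodule
    intro h
    have h2 : I ∈ LinearMap.ker Complex.imLm := h ▸ Submodule.mem_top
    simp [LinearMap.mem_ker] at h2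
  -- E and cos '' s agree a.e.
  have hsub1 : Complex.cos '' s ⊆ E := by
    rintro z ⟨ζ, ⟨hζ1, hζ2⟩, rfl⟩
    exact fwd c hc ζ hζ1 hζ2
  have hsub2 : E \ {z : ℂ | z.im = 0} ⊆ Complex.cos '' s := by
    rintro z ⟨hz, him⟩
    obtain ⟨ζ, ⟨h1, h2⟩, h3⟩ := bwd c hc z hz him
    exact ⟨ζ, ⟨h1, h2⟩, h3⟩
  have haeeq : E =ᵐ[volume] Complex.cos '' s := by
    rw [MeasureTheory.ae_eq_set]
    constructor
    · exact measure_mono_null (fun z hz => by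
        by_contra h
        exact hz.2 (hsub2 ⟨hz.1, h⟩)) hnull
    · rw [Set.diff_eq_empty.2 hsub1]
      simp
  rw [show (∫ z in E, (Polynomial.Chebyshev.U ℂ n).eval z *
        (starRingEnd ℂ) ((Polynomial.Chebyshev.U ℂ m).eval z)) = ∫ z in E, g z from rfl,
    MeasureTheory.setIntegral_congr_set haeeq]
  -- change of variables
  have hs : MeasurableSet s :=
    (measurableSet_Ioo.preimage Complex.measurable_re).inter
      (measurableSet_Ioo.preimage Complex.measurable_im)
  have hf' : ∀ ζ ∈ s, HasFDerivWithinAt Complex.cos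
      ((-Complex.sin ζ) • (1 : ℂ →L[ℝ] ℂ)) s ζ :=
    fun ζ _ => (Complex.hasDerivAt_cos ζ).complexToReal_fderiv.hasFDerivWithinAt
  rw [MeasureTheory.integral_image_eq_integral_abs_det_fderiv_smul volume hs hf' (inj_cos c) g]
  -- pointwise rewrite
  have hpt : ∀ ζ : ℂ,
      |((-Complex.sin ζ) • (1 : ℂ →L[ℝ] ℂ)).det|
        • g (Complex.cos ζ)
      = Complex.sin (((n:ℂ)+1)*(ζ.re + ζ.im*I)) *
          (starRingEnd ℂ) (Complex.sin (((m:ℂ)+1)*(ζ.re + ζ.im*I))) := by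
    intro ζ
    rw [det_smul_one, Complex.normSq_neg, _root_.abs_of_nonneg (Complex.normSq_nonneg _),
      Complex.real_smul, ← Complex.mul_conj, Complex.re_add_im]
    have hU : ∀ k : ℕ, (Polynomial.Chebyshev.U ℂ (k:ℤ)).eval (Complex.cos ζ) * Complex.sin ζ
        = Complex.sin (((k:ℂ)+1)*ζ) := by
      intro k
      have := Polynomial.Chebyshev.U_complex_cos ζ (k:ℤ)
      push_cast at this
      exact this
    rw [hg]
    simp only [← hU n, ← hU m]
    rw [map_mul]
    ring
  simp only [hpt]
  -- transfer to ℝ × ℝ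
  set G : ℝ × ℝ → ℂ := fun p => Complex.sin (((n:ℂ)+1)*(p.1 + p.2*I)) *
      (starRingEnd ℂ) (Complex.sin (((m:ℂ)+1)*(p.1 + p.2*I))) with hG
  have hT : s = Complex.measurableEquivRealProd ⁻¹' ((Set.Ioo 0 (2*π)) ×ˢ (Set.Ioo (-c) 0)) := rfl
  rw [hT]
  show (∫ ζ in Complex.measurableEquivRealProd ⁻¹' ((Set.Ioo 0 (2*π)) ×ˢ (Set.Ioo (-c) 0)),
      G (Complex.measurableEquivRealProd ζ)) = 0
  rw [(Complex.volume_preserving_equiv_real_prod).setIntegral_preimage_emb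
      Complex.measurableEquivRealProd.measurableEmbedding G _]
  have hGcont : Continuous G := by
    apply Continuous.mul
    · fun_prop
    · exact Complex.continuous_conj.comp (by fun_prop)
  have hGint : IntegrableOn G ((Set.Ioo 0 (2*π)) ×ˢ (Set.Ioo (-c) 0)) := by
    apply IntegrableOn.mono_set
      (hGcont.continuousOn.integrableOn_compact (isCompact_Icc.prod isCompact_Icc))
    exact Set.prod_mono Set.Ioo_subset_Icc_self Set.Ioo_subset_Icc_self
  have hGint' : Integrable G ((volume.restrict (Set.Ioo 0 (2*π))).prod
      (volume.restrict (Set.Ioo (-c) 0))) := by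
    rw [Measure.prod_restrict, ← Measure.volume_eq_prod]
    exact hGint
  have step : (∫ p in ((Set.Ioo 0 (2*π)) ×ˢ (Set.Ioo (-c) 0)), G p)
      = ∫ y in Set.Ioo (-c) 0, ∫ x in Set.Ioo 0 (2*π), G (x, y) := by
    rw [show (volume : Measure (ℝ×ℝ)).restrict ((Set.Ioo 0 (2*π)) ×ˢ (Set.Ioo (-c) 0))
        = (volume.restrict (Set.Ioo 0 (2*π))).prod (volume.restrict (Set.Ioo (-c) 0)) by
      rw [Measure.volume_eq_prod, Measure.prod_restrict]]
    exact MeasureTheory.integral_prod_symm G hGint'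
  rw [step]
  have hz : ∀ y : ℝ, (∫ x in Set.Ioo 0 (2*π), G (x, y)) = 0 := fun y => inner_zero n m hnm y
  simp only [hz, integral_zero]
end

section
/- With D the elliptical region b²x² + a²y² < a²b², a = cosh c, b = sinh c, c > 0, and ρ = (a+b)², the Chebyshev polynomial of the second kind U_n satisfies ∬_D |U_n(z)|² dx dy = (π/(4(n+1))) (ρ^{n+1} - ρ^{-(n+1)}). -/
open MeasureTheory Complex Real Polynomial

theorem L1 (n : ℤ) (w : ℂ) : (Chebyshev.U ℂ n).eval (Complex.cosh w) * Complex.sinh w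
    = Complex.sinh ((n+1) * w) := by
  have h := Chebyshev.U_complex_cos (w * I) n
  rw [Complex.cos_mul_I, Complex.sin_mul_I] at h
  have h2 : Complex.sin ((n+1) * (w * I)) = Complex.sinh ((n+1) * w) * I := by
    rw [← Complex.sin_mul_I]; ring_nf
  rw [h2] at h
  apply mul_right_cancel₀ I_ne_zero
  rw [mul_assoc]; exact h

theorem L5 (a : ℂ) : ((ContinuousLinearMap.smulRight (1 : ℂ →L[ℂ] ℂ) a).restrictScalars ℝ).det
    = Complex.normSq a := by
  have : ((ContinuousLinearMap.smulRight (1 : ℂ →L[ℂ] ℂ) a).restrictScalars ℝ : ℂ →ₗ[ℝ] ℂ)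
      = Algebra.lmul ℝ ℂ a := by
    ext z
    simp [mul_comm]
  rw [ContinuousLinearMap.det, this, ← Algebra.norm_apply, Algebra.norm_complex_apply]


theorem coshXY (x y : ℝ) : Complex.cosh (x + y*I) =
    (Real.cosh x * Real.cos y : ℝ) + (Real.sinh x * Real.sin y : ℝ) * I := by
  rw [Complex.cosh_add, Complex.cosh_mul_I, Complex.sinh_mul_I]
  push_cast [← Complex.ofReal_cosh, ← Complex.ofReal_sinh, ← Complex.ofReal_cos,
    ← Complex.ofReal_sin]
  ring

theorem sinhXY (x y : ℝ) : Complex.sinh (x + y*I) =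
    (Real.sinh x * Real.cos y : ℝ) + (Real.cosh x * Real.sin y : ℝ) * I := by
  rw [Complex.sinh_add, Complex.cosh_mul_I, Complex.sinh_mul_I]
  push_cast [← Complex.ofReal_cosh, ← Complex.ofReal_sinh, ← Complex.ofReal_cos,
    ← Complex.ofReal_sin]
  ring

theorem normSq_sinh (x y : ℝ) : ‖Complex.sinh (x + y*I)‖^2 =
    Real.sinh x ^2 + Real.sin y ^2 := by
  rw [sinhXY, ← Complex.normSq_eq_norm_sq, Complex.normSq_add_mul_I]
  have := Real.sin_sq_add_cos_sq y
  have := Real.cosh_sq x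
  nlinarith [Real.sin_sq_add_cos_sq y, Real.cosh_sq x]


theorem L2 (c : ℝ) : Set.InjOn Complex.cosh
    {w : ℂ | 0 < w.re ∧ w.re < c ∧ 0 < w.im ∧ w.im < 2*π} := by
  rintro w ⟨hw1, hw2, hw3, hw4⟩ w' ⟨hw1', hw2', hw3', hw4'⟩ h
  have hh : Complex.exp w + Complex.exp (-w) = Complex.exp w' + Complex.exp (-w') := by
    rw [← Complex.two_cosh, ← Complex.two_cosh, h]
  have a1 : Complex.exp w * Complex.exp (-(w+w')) = Complex.exp (-w') := by
    rw [← Complex.exp_add]; ring_nf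
  have a2 : Complex.exp w' * Complex.exp (-(w+w')) = Complex.exp (-w) := by
    rw [← Complex.exp_add]; ring_nf
  have key : (Complex.exp w - Complex.exp w') * (1 - Complex.exp (-(w+w'))) = 0 := by
    linear_combination hh - a1 + a2
  rcases mul_eq_zero.1 key with h1 | h2
  · have he : Complex.exp w = Complex.exp w' := by linear_combination h1
    obtain ⟨k, hk⟩ := Complex.exp_eq_exp_iff_exists_int.1 he
    have him : w.im = w'.im + k * (2*π) := by
      have := congrArg Complex.im hk
      simpa using this
    have hk0 : k = 0 := by
      have hπ := Real.pi_pos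
      have h1 : (k : ℝ) * (2*π) < 2*π := by linarith
      have h2 : -(2*π) < (k : ℝ) * (2*π) := by linarith
      have hl1 : (-1 : ℝ) < k := by nlinarith
      have hl2 : (k : ℝ) < 1 := by nlinarith
      have hl1' : (-1 : ℤ) < k := by exact_mod_cast hl1
      have hl2' : k < 1 := by exact_mod_cast hl2
      omega
    rw [hk0] at hk; simpa using hk
  · exfalso
    have h2' : Complex.exp (-(w+w')) = 1 := by linear_combination -h2
    have habs : ‖Complex.exp (-(w+w'))‖ = ‖(1:ℂ)‖ := by rw [h2']
    rw [Complex.norm_exp, norm_one, Real.exp_eq_one_iff] at habs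
    simp [Complex.add_re] at habs
    linarith


theorem L4 (c : ℝ) (hc : 0 < c) (z : ℂ)
    (hD : (Real.sinh c) ^ 2 * z.re ^ 2 + (Real.cosh c) ^ 2 * z.im ^ 2 <
        (Real.cosh c) ^ 2 * (Real.sinh c) ^ 2)
    (him : z.im ≠ 0) :
    ∃ w : ℂ, (0 < w.re ∧ w.re < c ∧ 0 < w.im ∧ w.im < 2*π) ∧ Complex.cosh w = z := by
  have hπ := Real.pi_pos
  -- z² ≠ 1
  have hz2 : z^2 - 1 ≠ 0 := by
    intro h
    have : (z - 1) * (z + 1) = 0 := by linear_combination h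
    rcases mul_eq_zero.1 this with h1 | h1
    · apply him; have : z = 1 := by linear_combination h1
      rw [this]; simp
    · apply him; have : z = -1 := by linear_combination h1
      rw [this]; simp
  set d := Complex.exp (Complex.log (z^2-1) / 2) with hd_def
  have hd : d * d = z^2 - 1 := by
    rw [hd_def, ← Complex.exp_add]
    rw [add_halves, Complex.exp_log hz2]
  -- pick the root u with |u| ≥ 1
  obtain ⟨u, hu, hmod⟩ : ∃ u : ℂ, u*u - 2*z*u + 1 = 0 ∧ 1 ≤ ‖u‖ := by
    rcases le_or_gt 1 ‖z+d‖ with h | h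
    · exact ⟨z+d, by linear_combination hd, h⟩
    · refine ⟨z-d, by linear_combination hd, ?_⟩
      have hprod : (z+d) * (z-d) = 1 := by linear_combination -hd
      have habs : ‖z+d‖ * ‖z-d‖ = 1 := by
        rw [← norm_mul, hprod, norm_one]
      have hne : ‖z+d‖ ≠ 0 := by
        intro h0; rw [h0, zero_mul] at habs; norm_num at habs
      have hpos : 0 < ‖z+d‖ := lt_of_le_of_ne (norm_nonneg _) (Ne.symm hne)
      nlinarith [habs]
  have hu0 : u ≠ 0 := by
    intro h0; rw [h0] at hu; norm_num at hu
  have huinv : u⁻¹ = 2*z - u := by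
    apply inv_eq_of_mul_eq_one_right
    linear_combination -hu
  have hcosh : Complex.cosh (Complex.log u) = z := by
    have h2 : 2 * Complex.cosh (Complex.log u) = 2 * z := by
      rw [Complex.two_cosh, Complex.exp_log hu0, Complex.exp_neg, Complex.exp_log hu0, huinv]
      ring
    field_simp at h2; exact h2
  have h2z : 2*z = u + u⁻¹ := by rw [huinv]; ring
  have hgt : 1 < ‖u‖ := by
    rcases lt_or_eq_of_le hmod with h | h
    · exact h
    · exfalso; apply him
      have hinv : u⁻¹ = (starRingEnd ℂ) u := by
        rw [Complex.inv_def, Complex.normSq_eq_norm_sq, ← h]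
        simp
      have himz : 2 * z.im = (u + (starRingEnd ℂ) u).im := by
        rw [← hinv, ← h2z]; simp
      simp [Complex.add_im, Complex.conj_im] at himz
      linarith
  set s := (Complex.log u).re with hs_def
  set θ := (Complex.log u).im with hθ_def
  have hlog : Complex.log u = (s:ℝ) + (θ:ℝ)*I := (Complex.re_add_im _).symm
  have hs0 : 0 < s := by rw [hs_def, Complex.log_re]; exact Real.log_pos hgt
  have hzc : z = Complex.cosh ((s:ℝ) + (θ:ℝ)*I) := by rw [← hlog, hcosh]
  rw [coshXY] at hzc
  have hzre : z.re = Real.cosh s * Real.cos θ := by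
    rw [hzc, Complex.add_re, Complex.ofReal_re, Complex.mul_re, Complex.I_re, Complex.I_im,
      Complex.ofReal_im]; ring
  have hzim : z.im = Real.sinh s * Real.sin θ := by
    rw [hzc, Complex.add_im, Complex.ofReal_im, Complex.mul_im, Complex.I_re, Complex.I_im,
      Complex.ofReal_re]; ring
  have hsc : s < c := by
    by_contra hle; push_neg at hle
    have hA : Real.cosh c ≤ Real.cosh s := by
      rw [Real.cosh_le_cosh, abs_of_pos hc, abs_of_pos hs0]; exact hle
    have hB : Real.sinh c ≤ Real.sinh s := Real.sinh_le_sinh.2 hle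
    have hB0 : 0 < Real.sinh c := Real.sinh_pos_iff.2 hc
    have hA0 : (1:ℝ) ≤ Real.cosh c := Real.one_le_cosh c
    have htrig := Real.sin_sq_add_cos_sq θ
    rw [hzre, hzim] at hD
    have hA2 : Real.cosh c^2 ≤ Real.cosh s^2 := by nlinarith [Real.cosh_pos c, Real.cosh_pos s]
    have hB2 : Real.sinh c^2 ≤ Real.sinh s^2 := by nlinarith
    have e1 : 0 ≤ Real.sinh c^2 * Real.cos θ^2 * (Real.cosh s^2 - Real.cosh c^2) :=
      mul_nonneg (mul_nonneg (sq_nonneg _) (sq_nonneg _)) (by linarith)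
    have e2 : 0 ≤ Real.cosh c^2 * Real.sin θ^2 * (Real.sinh s^2 - Real.sinh c^2) :=
      mul_nonneg (mul_nonneg (sq_nonneg _) (sq_nonneg _)) (by linarith)
    have e3 : Real.cosh c^2 * Real.sinh c^2 * (Real.sin θ^2 + Real.cos θ^2)
        = Real.cosh c^2 * Real.sinh c^2 := by rw [htrig, mul_one]
    nlinarith [e1, e2, e3]
  by_cases hθ : 0 < θ
  · exact ⟨Complex.log u, ⟨hs0, hsc, hθ,
      lt_of_le_of_lt (Complex.log_im_le_pi u) (by linarith)⟩, hcosh⟩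
  · push_neg at hθ
    have hθne : θ ≠ 0 := by
      intro h0
      apply him
      have harg : Complex.arg u = 0 := by rw [← Complex.log_im, ← hθ_def, h0]
      obtain ⟨hre0, him0⟩ := Complex.arg_eq_zero_iff.1 harg
      have h1 : (u⁻¹).im = 0 := by rw [Complex.inv_im, him0]; simp
      have h2 := congrArg Complex.im h2z
      simp [Complex.add_im, him0, h1] at h2
      simpa using h2
    have hθlt : -π < θ := by rw [hθ_def, Complex.log_im]; exact Complex.neg_pi_lt_arg u
    have himw : (Complex.log u + 2*(π:ℂ)*I).im = θ + 2*π := by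
      simp [Complex.add_im, Complex.mul_im, hθ_def]
    have hrew : (Complex.log u + 2*(π:ℂ)*I).re = s := by
      simp [Complex.add_re, Complex.mul_re, hs_def]
    refine ⟨Complex.log u + 2*(π:ℂ)*I, ⟨?_, ?_, ?_, ?_⟩, ?_⟩
    · rw [hrew]; exact hs0
    · rw [hrew]; exact hsc
    · rw [himw]; linarith
    · rw [himw]; cases lt_or_eq_of_le hθ with
      | inl h => linarith
      | inr h => exact absurd h hθne
    · have hexp1 : Complex.exp (Complex.log u + 2*(π:ℂ)*I) = Complex.exp (Complex.log u) := by
        rw [Complex.exp_add, Complex.exp_two_pi_mul_I, mul_one]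
      have hexp2 : Complex.exp (-(Complex.log u + 2*(π:ℂ)*I)) = Complex.exp (-Complex.log u) := by
        rw [neg_add, Complex.exp_add, Complex.exp_neg (2*(π:ℂ)*I), Complex.exp_two_pi_mul_I,
          inv_one, mul_one]
      have hcc : 2 * Complex.cosh (Complex.log u + 2*(π:ℂ)*I)
          = 2 * Complex.cosh (Complex.log u) := by
        rw [Complex.two_cosh, Complex.two_cosh, hexp1, hexp2]
      have h2 := mul_left_cancel₀ (two_ne_zero (α := ℂ)) hcc
      rw [h2, hcosh]


theorem stripInt (c : ℝ) (hc : 0 < c) (n : ℕ) :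
    (∫ w in {w : ℂ | 0 < w.re ∧ w.re < c ∧ 0 < w.im ∧ w.im < 2*π},
        ‖Complex.sinh (((n:ℂ)+1) * w)‖^2)
      = π * Real.sinh (2*((n:ℝ)+1)*c) / (2*((n:ℝ)+1)) := by
  have hπ := Real.pi_pos
  set m : ℝ := (n:ℝ)+1 with hm_def
  have hm0 : 0 < m := by positivity
  have hfun : ∀ w : ℂ, ‖Complex.sinh (((n:ℂ)+1) * w)‖^2
      = Real.sinh (m*w.re)^2 + Real.sin (m*w.im)^2 := by
    intro w
    have harg : ((n:ℂ)+1) * w = ((m * w.re : ℝ) : ℂ) + ((m * w.im : ℝ) : ℂ) * I := by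
      apply Complex.ext <;>
        simp [Complex.mul_re, Complex.mul_im, hm_def] <;> push_cast <;> ring
    rw [harg, normSq_sinh]
  have hSeq : {w : ℂ | 0 < w.re ∧ w.re < c ∧ 0 < w.im ∧ w.im < 2*π}
      = Complex.measurableEquivRealProd.symm '' ((Set.Ioo 0 c) ×ˢ (Set.Ioo 0 (2*π))) := by
    ext w
    simp only [Set.mem_image, Set.mem_prod, Set.mem_Ioo,
      Complex.measurableEquivRealProd_symm_apply, Set.mem_setOf_eq]
    constructor
    · rintro ⟨h1,h2,h3,h4⟩; exact ⟨(w.re, w.im), ⟨⟨h1,h2⟩,⟨h3,h4⟩⟩, rfl⟩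
    · rintro ⟨p, ⟨⟨h1,h2⟩,⟨h3,h4⟩⟩, rfl⟩; exact ⟨h1,h2,h3,h4⟩
  rw [hSeq, MeasurePreserving.setIntegral_image_emb
    (Complex.volume_preserving_equiv_real_prod.symm)
    Complex.measurableEquivRealProd.symm.measurableEmbedding]
  have hfe : (fun p : ℝ×ℝ => ‖Complex.sinh (((n:ℂ)+1) * (Complex.measurableEquivRealProd.symm p))‖^2)
      = fun p : ℝ×ℝ => Real.sinh (m*p.1)^2 + Real.sin (m*p.2)^2 := by
    funext p; rw [hfun]; rfl
  rw [hfe]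
  have hcont : Continuous fun p : ℝ×ℝ => Real.sinh (m*p.1)^2 + Real.sin (m*p.2)^2 := by
    fun_prop
  have hInt : IntegrableOn (fun p : ℝ×ℝ => Real.sinh (m*p.1)^2 + Real.sin (m*p.2)^2)
      ((Set.Ioo 0 c) ×ˢ (Set.Ioo 0 (2*π))) ((volume : Measure ℝ).prod volume) := by
    rw [← MeasureTheory.Measure.volume_eq_prod ℝ ℝ]
    exact (hcont.continuousOn.integrableOn_compact
      ((isCompact_Icc (a := (0:ℝ)) (b := c)).prod (isCompact_Icc (a := (0:ℝ)) (b := 2*π)))).mono_set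
      (Set.prod_mono Set.Ioo_subset_Icc_self Set.Ioo_subset_Icc_self)
  rw [MeasureTheory.Measure.volume_eq_prod ℝ ℝ, MeasureTheory.setIntegral_prod _ hInt]
  have hsin2 : ∫ y in (0:ℝ)..(2*π), Real.sin (m*y)^2 = π := by
    rw [intervalIntegral.integral_comp_mul_left (fun y => Real.sin y ^2) (ne_of_gt hm0)]
    rw [integral_sin_sq]
    have h2π : m * (2*π) = ((2*(n+1) : ℕ) : ℝ) * π := by push_cast [hm_def]; ring
    rw [mul_zero, h2π, Real.sin_nat_mul_pi]
    rw [← h2π]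
    simp [smul_eq_mul]
    field_simp
  have hinner : ∀ x : ℝ, (∫ y in Set.Ioo 0 (2*π), (Real.sinh (m*x)^2 + Real.sin (m*y)^2))
      = 2*π*Real.sinh (m*x)^2 + π := by
    intro x
    rw [← MeasureTheory.integral_Ioc_eq_integral_Ioo,
      ← intervalIntegral.integral_of_le (by positivity : (0:ℝ) ≤ 2*π)]
    rw [intervalIntegral.integral_add (intervalIntegrable_const)
      ((by fun_prop : Continuous fun y : ℝ => Real.sin (m*y)^2).intervalIntegrable _ _)]
    rw [intervalIntegral.integral_const, hsin2]
    simp [smul_eq_mul]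
    try ring
  simp only [hinner]
  rw [← MeasureTheory.integral_Ioc_eq_integral_Ioo,
    ← intervalIntegral.integral_of_le hc.le]
  have hch : ∀ x : ℝ, 2*π*Real.sinh (m*x)^2 + π = π * Real.cosh (2*m*x) := by
    intro x
    have h1 : Real.cosh (2*m*x) = Real.cosh (2*(m*x)) := by ring_nf
    rw [h1, Real.cosh_two_mul, Real.sinh_sq]
    ring
  simp only [hch]
  rw [intervalIntegral.integral_const_mul]
  rw [intervalIntegral.integral_comp_mul_left (fun t => Real.cosh t)
    (by positivity : (2*m) ≠ 0)]
  have hcosh_int : ∫ t in (2*m*0)..(2*m*c), Real.cosh t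
      = Real.sinh (2*m*c) - Real.sinh (2*m*0) :=
    intervalIntegral.integral_eq_sub_of_hasDerivAt
      (fun t _ => Real.hasDerivAt_sinh t) (Real.continuous_cosh.intervalIntegrable _ _)
  rw [hcosh_int]
  simp [smul_eq_mul, Real.sinh_zero]
  field_simp


theorem L3 (c : ℝ) (hc : 0 < c) (w : ℂ) (hw : 0 < w.re ∧ w.re < c ∧ 0 < w.im ∧ w.im < 2*π) :
    (Real.sinh c) ^ 2 * (Complex.cosh w).re ^ 2 + (Real.cosh c) ^ 2 * (Complex.cosh w).im ^ 2 <
      (Real.cosh c) ^ 2 * (Real.sinh c) ^ 2 := by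
  obtain ⟨h1, h2, _, _⟩ := hw
  have hw' : Complex.cosh w = Complex.cosh ((w.re : ℝ) + (w.im : ℝ)*I) := by
    rw [Complex.re_add_im]
  rw [hw', coshXY]
  set x := w.re; set θ := w.im
  have hre : ((Real.cosh x * Real.cos θ : ℝ) + (Real.sinh x * Real.sin θ : ℝ) * I).re
      = Real.cosh x * Real.cos θ := by
    rw [Complex.add_re, Complex.ofReal_re, Complex.mul_re, Complex.I_re, Complex.I_im,
      Complex.ofReal_im]; ring
  have him : ((Real.cosh x * Real.cos θ : ℝ) + (Real.sinh x * Real.sin θ : ℝ) * I).im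
      = Real.sinh x * Real.sin θ := by
    rw [Complex.add_im, Complex.ofReal_im, Complex.mul_im, Complex.I_re, Complex.I_im,
      Complex.ofReal_re]; ring
  rw [hre, him]
  have hp : Real.cosh x < Real.cosh c := by
    rw [Real.cosh_lt_cosh, abs_of_pos h1, abs_of_pos hc]; exact h2
  have hq : Real.sinh x < Real.sinh c := Real.sinh_lt_sinh.2 h2
  have hq0 : 0 < Real.sinh x := Real.sinh_pos_iff.2 h1
  have hp1 : (1:ℝ) ≤ Real.cosh x := Real.one_le_cosh x
  have htrig := Real.sin_sq_add_cos_sq θ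
  have hp2 : Real.cosh x ^2 < Real.cosh c ^2 := by nlinarith
  have hq2 : Real.sinh x ^2 < Real.sinh c ^2 := by nlinarith
  have e3 : Real.cosh c^2*Real.sinh c^2*(Real.sin θ^2+Real.cos θ^2)
      = Real.cosh c^2*Real.sinh c^2 := by rw [htrig, mul_one]
  rcases le_or_gt (Real.cos θ ^2) (1/2) with hu | hu
  · have hv : 1/2 ≤ Real.sin θ ^2 := by linarith
    have e1 : 0 ≤ Real.sinh c^2 * Real.cos θ^2 * (Real.cosh c^2 - Real.cosh x^2) :=
      mul_nonneg (mul_nonneg (sq_nonneg _) (sq_nonneg _)) (by linarith)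
    have e2 : Real.cosh c^2 * (1/2) * (Real.sinh c^2 - Real.sinh x^2)
        ≤ Real.cosh c^2 * Real.sin θ^2 * (Real.sinh c^2 - Real.sinh x^2) := by
      apply mul_le_mul_of_nonneg_right _ (by linarith)
      apply mul_le_mul_of_nonneg_left hv (by positivity)
    have hA2pos : (0:ℝ) < Real.cosh c^2 := by positivity
    nlinarith [e3, mul_pos hA2pos (show (0:ℝ) < Real.sinh c^2 - Real.sinh x^2 by linarith)]
  · have e1 : Real.sinh c^2 * (1/2) * (Real.cosh c^2 - Real.cosh x^2)
        ≤ Real.sinh c^2 * Real.cos θ^2 * (Real.cosh c^2 - Real.cosh x^2) := by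
      apply mul_le_mul_of_nonneg_right _ (by linarith)
      apply mul_le_mul_of_nonneg_left hu.le (by positivity)
    have e2 : 0 ≤ Real.cosh c^2 * Real.sin θ^2 * (Real.sinh c^2 - Real.sinh x^2) :=
      mul_nonneg (mul_nonneg (sq_nonneg _) (sq_nonneg _)) (by linarith)
    have hBpos : 0 < Real.sinh c := Real.sinh_pos_iff.2 hc
    have hB2pos : (0:ℝ) < Real.sinh c^2 := by positivity
    nlinarith [e3, mul_pos hB2pos (show (0:ℝ) < Real.cosh c^2 - Real.cosh x^2 by linarith)]

theorem nullLine : (volume : Measure ℂ) {z : ℂ | z.im = 0} = 0 := by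
  have h : {z : ℂ | z.im = 0}
      = Complex.measurableEquivRealProd ⁻¹' (Set.univ ×ˢ ({0} : Set ℝ)) := by
    ext z; simp [Complex.measurableEquivRealProd_apply, eq_comm]
  rw [h, Complex.volume_preserving_equiv_real_prod.measure_preimage
    (MeasurableSet.univ.prod (measurableSet_singleton 0)).nullMeasurableSet]
  rw [MeasureTheory.Measure.volume_eq_prod ℝ ℝ, MeasureTheory.Measure.prod_prod]
  simp

/-- Norm of the Chebyshev polynomial of the second kind over the elliptical
region with semi-axes `a = cosh c`, `b = sinh c`:
`∬_D |Uₙ|² = (π/(4(n+1)))(ρ^{n+1} - ρ^{-(n+1)})` where `ρ = (a+b)²`. -/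
theorem chebyshevU_norm_ellipse (c : ℝ) (hc : 0 < c) (n : ℕ) :
    (∫ z in {z : ℂ | (Real.sinh c) ^ 2 * z.re ^ 2 + (Real.cosh c) ^ 2 * z.im ^ 2 <
        (Real.cosh c) ^ 2 * (Real.sinh c) ^ 2},
      ‖(Polynomial.Chebyshev.U ℂ n).eval z‖ ^ 2) =
      π / (4 * (n + 1)) *
        ((Real.cosh c + Real.sinh c) ^ (2 * (n + 1)) -
          ((Real.cosh c + Real.sinh c) ^ (2 * (n + 1)))⁻¹) := by
  have hπ := Real.pi_pos
  set S : Set ℂ := {w : ℂ | 0 < w.re ∧ w.re < c ∧ 0 < w.im ∧ w.im < 2*π} with hS_def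
  have hSmeas : MeasurableSet S := by
    have hSp : S = Complex.measurableEquivRealProd ⁻¹' ((Set.Ioo 0 c) ×ˢ (Set.Ioo 0 (2*π))) := by
      ext w
      simp [hS_def, Complex.measurableEquivRealProd_apply, Set.mem_prod, and_assoc]
    rw [hSp]
    exact Complex.measurableEquivRealProd.measurable (measurableSet_Ioo.prod measurableSet_Ioo)
  have hder : ∀ w ∈ S, HasFDerivWithinAt Complex.cosh
      (((1 : ℂ →L[ℂ] ℂ).smulRight (Complex.sinh w)).restrictScalars ℝ) S w :=
    fun w _ => ((Complex.hasDerivAt_cosh w).hasFDerivAt.restrictScalars ℝ).hasFDerivWithinAt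
  have hCOV := MeasureTheory.integral_image_eq_integral_abs_det_fderiv_smul volume hSmeas hder
      (L2 c) (fun z => ‖(Polynomial.Chebyshev.U ℂ (n : ℤ)).eval z‖^2)
  have haeeq : {z : ℂ | (Real.sinh c) ^ 2 * z.re ^ 2 + (Real.cosh c) ^ 2 * z.im ^ 2 <
        (Real.cosh c) ^ 2 * (Real.sinh c) ^ 2} =ᵐ[volume] Complex.cosh '' S := by
    rw [MeasureTheory.ae_eq_set]
    constructor
    · apply measure_mono_null _ nullLine
      rintro z ⟨hzD, hznot⟩
      by_contra him
      obtain ⟨w, hw, hwc⟩ := L4 c hc z hzD him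
      exact hznot ⟨w, hw, hwc⟩
    · apply measure_mono_null _ (measure_empty (μ := (volume : Measure ℂ)))
      rintro z ⟨⟨w, hw, rfl⟩, hznot⟩
      exact absurd (L3 c hc w hw) hznot
  rw [MeasureTheory.setIntegral_congr_set haeeq, hCOV]
  have hint_eq : (fun w : ℂ =>
      |((((1 : ℂ →L[ℂ] ℂ).smulRight (Complex.sinh w)).restrictScalars ℝ)).det|
        • ‖(Polynomial.Chebyshev.U ℂ (n : ℤ)).eval (Complex.cosh w)‖^2)
      = fun w : ℂ => ‖Complex.sinh (((n:ℂ)+1) * w)‖^2 := by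
    funext w
    rw [L5, smul_eq_mul, _root_.abs_of_nonneg (Complex.normSq_nonneg _)]
    have h1 : Complex.normSq (Complex.sinh w) = ‖Complex.sinh w‖^2 := by
      rw [Complex.normSq_eq_norm_sq]
    rw [h1]
    have h2 := L1 (n : ℤ) w
    have h3 : (((n : ℤ) : ℂ) + 1) = ((n:ℂ)+1) := by push_cast; ring
    rw [h3] at h2
    calc ‖Complex.sinh w‖^2 * ‖(Polynomial.Chebyshev.U ℂ (n : ℤ)).eval (Complex.cosh w)‖^2
        = ‖(Polynomial.Chebyshev.U ℂ (n : ℤ)).eval (Complex.cosh w) * Complex.sinh w‖^2 := by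
          rw [norm_mul]; ring
      _ = ‖Complex.sinh (((n:ℂ)+1) * w)‖^2 := by rw [h2]
  rw [hint_eq, stripInt c hc n]
  have hE : (Real.cosh c + Real.sinh c)^(2*(n+1)) = Real.exp (2*((n:ℝ)+1)*c) := by
    rw [Real.cosh_add_sinh, ← Real.exp_nat_mul]
    congr 1
    push_cast
    ring
  rw [hE, ← Real.exp_neg, Real.sinh_eq]
  have hm : ((n:ℝ)+1) ≠ 0 := by positivity
  field_simp
  ring_nf
end
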